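/- arXiv:2604.08018 — 7 statements merged into one kernel-verified Lean document; each statement's English description precedes it below -/
import Mathlib

section
/- For a discrete-time LTI system (A,B,C,D), the following two conditions are equivalent: (i) there exists z ∈ ℂ such that the Rosenbrock matrix [A − zI, B; C, D] ∈ ℂ^{(n+p)×(n+m)} has rank n + m; (ii) there exist a natural number L ≤ n and a matrix P ∈ ℝ^{m×(L+1)p} such that P · I_L = [I_m, 0], where [I_m, 0] ∈ ℝ^{m×(L+1)m}. -/
set_option synthInstance.maxHeartbeats 400000
set_option maxHeartbeats 1000000
set_option linter.unusedTactic false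
set_option linter.unreachableTactic false
set_option linter.unnecessarySeqFocus false


open Matrix

/-- Block invertibility (Toeplitz) matrix `I_L` of the LTI system `(A,B,C,D)`:
block `(j,i)` equals `D` if `j = i`, `C A^(j-i-1) B` if `i < j`, and `0` otherwise. -/
noncomputable def invMat {n m p : ℕ} (A : Matrix (Fin n) (Fin n) ℝ)
    (B : Matrix (Fin n) (Fin m) ℝ) (C : Matrix (Fin p) (Fin n) ℝ)
    (D : Matrix (Fin p) (Fin m) ℝ) (L : ℕ) :
    Matrix (Fin (L + 1) × Fin p) (Fin (L + 1) × Fin m) ℝ :=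
  fun jr ic =>
    if (jr.1 : ℕ) = (ic.1 : ℕ) then D jr.2 ic.2
    else if (ic.1 : ℕ) < (jr.1 : ℕ) then
      (C * A ^ ((jr.1 : ℕ) - (ic.1 : ℕ) - 1) * B) jr.2 ic.2
    else 0

/-- The block matrix `[I_m, 0] ∈ ℝ^{m × (L+1)m}`. -/
noncomputable def idZero (m L : ℕ) : Matrix (Fin m) (Fin (L + 1) × Fin m) ℝ :=
  fun r ic => if (ic.1 : ℕ) = 0 ∧ r = ic.2 then 1 else 0

/-- The Rosenbrock matrix `[A - zI, B; C, D] ∈ ℂ^{(n+p) × (n+m)}`. -/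
noncomputable def rosenbrock {n m p : ℕ} (A : Matrix (Fin n) (Fin n) ℝ)
    (B : Matrix (Fin n) (Fin m) ℝ) (C : Matrix (Fin p) (Fin n) ℝ)
    (D : Matrix (Fin p) (Fin m) ℝ) (z : ℂ) :
    Matrix (Fin n ⊕ Fin p) (Fin n ⊕ Fin m) ℂ :=
  Matrix.fromBlocks (A.map Complex.ofReal - z • 1) (B.map Complex.ofReal)
    (C.map Complex.ofReal) (D.map Complex.ofReal)


open Matrix Polynomial

/-- mulVec commutes with entrywise ring hom application. -/
lemma aux_map_mulVec {R S : Type*} [CommSemiring R] [CommSemiring S] (f : R →+* S)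
    {ι κ : Type*} [Fintype κ] (M : Matrix ι κ R) (v : κ → R) :
    (M.map f) *ᵥ (fun j => f (v j)) = fun i => f ((M *ᵥ v) i) := by
  ext i
  simp [Matrix.mulVec, dotProduct, map_sum, Matrix.map_apply]

/-- Factoring a matrix through another over a field. -/
lemma aux_exists_left_factor {𝕜 : Type*} [Field 𝕜] {ι κ ρ : Type*}
    [Fintype ι] [Fintype κ] [Fintype ρ] [DecidableEq ι] [DecidableEq κ]
    (M : Matrix ι κ 𝕜) (E : Matrix ρ κ 𝕜)
    (h : ∀ v, M *ᵥ v = 0 → E *ᵥ v = 0) : ∃ P : Matrix ρ ι 𝕜, P * M = E := by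
  set f := Matrix.toLin' M with hf
  set g := Matrix.toLin' E with hg
  obtain ⟨s, hs⟩ := f.rangeRestrict.exists_rightInverse_of_surjective
    (LinearMap.range_rangeRestrict f)
  obtain ⟨h', hh'⟩ := LinearMap.exists_extend (g ∘ₗ s)
  refine ⟨LinearMap.toMatrix' h', Matrix.toLin'.injective ?_⟩
  rw [Matrix.toLin'_mul, Matrix.toLin'_toMatrix']
  refine LinearMap.ext fun v => ?_
  show h' (f v) = g v
  have h2 : f.rangeRestrict (s (f.rangeRestrict v)) = f.rangeRestrict v := by
    have := congrArg (fun (t : LinearMap.range f →ₗ[𝕜] LinearMap.range f) => t (f.rangeRestrict v)) hs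
    simpa only [LinearMap.comp_apply, LinearMap.id_apply] using this
  have h3 : f (s (f.rangeRestrict v)) = f v := congrArg Subtype.val h2
  have h4 : g (s (f.rangeRestrict v)) = g v := by
    have hker : f (s (f.rangeRestrict v) - v) = 0 := by
      rw [map_sub, h3, sub_self]
    have : g (s (f.rangeRestrict v) - v) = 0 := by
      have hM : M *ᵥ (s (f.rangeRestrict v) - v) = 0 := by
        rw [← Matrix.toLin'_apply M]; exact hker
      have := h _ hM
      rw [← Matrix.toLin'_apply E] at this; exact this
    rw [map_sub, sub_eq_zero] at this; exact this
  calc h' (f v) = (h' ∘ₗ (LinearMap.range f).subtype) (f.rangeRestrict v) := rfl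
    _ = (g ∘ₗ s) (f.rangeRestrict v) := by rw [hh']
    _ = g v := h4

/-- Full column rank iff injective mulVec, over a field. -/
lemma aux_rank_eq_card_iff {𝕜 : Type*} [Field 𝕜] {ι κ : Type*}
    [Fintype ι] [Fintype κ] (M : Matrix ι κ 𝕜) :
    M.rank = Fintype.card κ ↔ ∀ v, M *ᵥ v = 0 → v = 0 := by
  rw [← Matrix.ker_mulVecLin_eq_bot_iff]
  have hrn := LinearMap.finrank_range_add_finrank_ker M.mulVecLin
  rw [Module.finrank_fintype_fun_eq_card] at hrn
  constructor
  · intro h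
    rw [Matrix.rank] at h
    have : Module.finrank 𝕜 (LinearMap.ker M.mulVecLin) = 0 := by omega
    exact Submodule.finrank_eq_zero.mp this
  · intro h
    rw [Matrix.rank]
    have : Module.finrank 𝕜 (LinearMap.ker M.mulVecLin) = 0 := by
      rw [h]; simp
    omega


/-- Clearing denominators of a vector of rational functions. -/
lemma aux_clear_denoms {ι : Type*} [Fintype ι] (v : ι → RatFunc ℝ) :
    ∃ (w : ι → Polynomial ℝ) (q : Polynomial ℝ), q ≠ 0 ∧
      ∀ i, algebraMap (Polynomial ℝ) (RatFunc ℝ) (w i)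
        = algebraMap (Polynomial ℝ) (RatFunc ℝ) q * v i := by
  classical
  set q : Polynomial ℝ := ∏ i : ι, (v i).denom with hq
  have hqne : q ≠ 0 := Finset.prod_ne_zero_iff.mpr fun i _ => RatFunc.denom_ne_zero _
  have hdvd : ∀ i, (v i).denom ∣ q := fun i => Finset.dvd_prod_of_mem _ (Finset.mem_univ i)
  refine ⟨fun i => (v i).num * Classical.choose (hdvd i), q, hqne, fun i => ?_⟩
  have hc := Classical.choose_spec (hdvd i)
  have hdne : algebraMap (Polynomial ℝ) (RatFunc ℝ) (v i).denom ≠ 0 := fun h =>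
    RatFunc.denom_ne_zero (v i) (RatFunc.algebraMap_injective ℝ (by simpa using h))
  have hval : algebraMap (Polynomial ℝ) (RatFunc ℝ) (v i).num
      = v i * algebraMap (Polynomial ℝ) (RatFunc ℝ) (v i).denom := by
    calc algebraMap (Polynomial ℝ) (RatFunc ℝ) (v i).num
        = algebraMap (Polynomial ℝ) (RatFunc ℝ) (v i).num
            / algebraMap (Polynomial ℝ) (RatFunc ℝ) (v i).denom
            * algebraMap (Polynomial ℝ) (RatFunc ℝ) (v i).denom :=
          (div_mul_cancel₀ _ hdne).symm
      _ = v i * algebraMap (Polynomial ℝ) (RatFunc ℝ) (v i).denom := by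
          rw [RatFunc.num_div_denom]
  have hq2 := congrArg (algebraMap (Polynomial ℝ) (RatFunc ℝ)) hc
  rw [_root_.map_mul] at hq2
  rw [_root_.map_mul, hval, hq2]
  ring

section LTI

variable {n m p : ℕ} (A : Matrix (Fin n) (Fin n) ℝ) (B : Matrix (Fin n) (Fin m) ℝ)
    (C : Matrix (Fin p) (Fin n) ℝ) (D : Matrix (Fin p) (Fin m) ℝ)

/-- The Rosenbrock matrix as a polynomial matrix. -/
noncomputable def auxMP : Matrix (Fin n ⊕ Fin p) (Fin n ⊕ Fin m) (Polynomial ℝ) :=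
  fromBlocks (A.map Polynomial.C - (X : Polynomial ℝ) • 1) (B.map Polynomial.C)
    (C.map Polynomial.C) (D.map Polynomial.C)

/-- The Rosenbrock matrix over the field of rational functions. -/
noncomputable def auxMF : Matrix (Fin n ⊕ Fin p) (Fin n ⊕ Fin m) (RatFunc ℝ) :=
  (auxMP A B C D).map (algebraMap (Polynomial ℝ) (RatFunc ℝ))

/-- Full column rank over the rational function field, as injectivity. -/
def FullF : Prop := ∀ v : (Fin n ⊕ Fin m) → RatFunc ℝ, auxMF A B C D *ᵥ v = 0 → v = 0

/-- Evaluation of the polynomial Rosenbrock matrix gives the complex Rosenbrock matrix. -/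
lemma aux_eval_MP (z : ℂ) :
    ((auxMP A B C D).map (Polynomial.mapRingHom Complex.ofRealHom)).map (Polynomial.evalRingHom z)
      = rosenbrock A B C D z := by
  ext i j
  rcases i with i | i <;> rcases j with j | j <;>
    simp only [auxMP, rosenbrock, Matrix.map_apply, Matrix.fromBlocks_apply₁₁,
      Matrix.fromBlocks_apply₁₂, Matrix.fromBlocks_apply₂₁, Matrix.fromBlocks_apply₂₂,
      Matrix.sub_apply, Matrix.smul_apply, Matrix.one_apply, smul_eq_mul,
      Polynomial.coe_mapRingHom, Polynomial.coe_evalRingHom, Polynomial.map_sub,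
      Polynomial.eval_sub, Polynomial.map_mul, Polynomial.eval_mul] <;>
    first
      | (split_ifs <;> simp [Complex.ofRealHom_eq_coe, mul_comm])
      | simp [Complex.ofRealHom_eq_coe]

end LTI

lemma aux_map_smul_one {R S : Type*} [CommSemiring R] [CommSemiring S] (f : R →+* S)
    {k : Type*} [Fintype k] [DecidableEq k] (q : R) :
    (q • (1 : Matrix k k R)).map f = f q • (1 : Matrix k k S) := by
  ext i j
  simp [Matrix.map_apply, Matrix.smul_apply, Matrix.one_apply, apply_ite f, smul_eq_mul]

section LTI2
variable {n m p : ℕ} (A : Matrix (Fin n) (Fin n) ℝ) (B : Matrix (Fin n) (Fin m) ℝ)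
    (C : Matrix (Fin p) (Fin n) ℝ) (D : Matrix (Fin p) (Fin m) ℝ)

lemma aux_fullF_to_rank (h : FullF A B C D) :
    ∃ z : ℂ, (rosenbrock A B C D z).rank = n + m := by
  classical
  have hker : LinearMap.ker (Matrix.toLin' (auxMF A B C D)) = ⊥ := by
    rw [LinearMap.ker_eq_bot']
    intro v hv
    exact h v (by rwa [Matrix.toLin'_apply] at hv)
  obtain ⟨g, hg⟩ := (Matrix.toLin' (auxMF A B C D)).exists_leftInverse_of_injective hker
  have hNM : LinearMap.toMatrix' g * auxMF A B C D = 1 := by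
    apply Matrix.toLin'.injective
    rw [Matrix.toLin'_mul, Matrix.toLin'_toMatrix', Matrix.toLin'_one]
    exact hg
  obtain ⟨w, q, hq, hw⟩ := aux_clear_denoms
    (fun ij : (Fin n ⊕ Fin m) × (Fin n ⊕ Fin p) => LinearMap.toMatrix' g ij.1 ij.2)
  have hNqmap : (Matrix.of (fun i j => w (i, j))).map (algebraMap (Polynomial ℝ) (RatFunc ℝ))
      = algebraMap (Polynomial ℝ) (RatFunc ℝ) q • LinearMap.toMatrix' g := by
    ext i j
    simp only [Matrix.map_apply, Matrix.smul_apply, smul_eq_mul, Matrix.of_apply]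
    exact hw (i, j)
  have hmapeq : ((Matrix.of (fun i j => w (i, j))) * auxMP A B C D).map
        (algebraMap (Polynomial ℝ) (RatFunc ℝ))
      = (q • (1 : Matrix (Fin n ⊕ Fin m) (Fin n ⊕ Fin m) (Polynomial ℝ))).map
        (algebraMap (Polynomial ℝ) (RatFunc ℝ)) := by
    rw [Matrix.map_mul, hNqmap, aux_map_smul_one, Matrix.smul_mul]
    show _ • (LinearMap.toMatrix' g * auxMF A B C D) = _
    rw [hNM]
  have key : (Matrix.of (fun i j => w (i, j))) * auxMP A B C D = q • 1 := by
    refine Matrix.ext fun i j => ?_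
    have := congrFun (congrFun hmapeq i) j
    simp only [Matrix.map_apply] at this
    exact RatFunc.algebraMap_injective ℝ this
  have key2 : ((Matrix.of (fun i j => w (i, j))).map (Polynomial.mapRingHom Complex.ofRealHom))
      * ((auxMP A B C D).map (Polynomial.mapRingHom Complex.ofRealHom))
      = (Polynomial.mapRingHom Complex.ofRealHom q) • 1 := by
    rw [← Matrix.map_mul, key, aux_map_smul_one]
  have hφq : Polynomial.mapRingHom Complex.ofRealHom q ≠ 0 := by
    intro h0
    exact hq (Polynomial.map_injective Complex.ofRealHom Complex.ofReal_injective (by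
      simpa [Polynomial.coe_mapRingHom] using h0))
  obtain ⟨z, hz⟩ : ∃ z : ℂ, Polynomial.eval z (Polynomial.mapRingHom Complex.ofRealHom q) ≠ 0 := by
    by_contra h0
    push_neg at h0
    exact hφq (Polynomial.zero_of_eval_zero _ h0)
  refine ⟨z, ?_⟩
  have hc : Fintype.card (Fin n ⊕ Fin m) = n + m := by simp
  rw [← hc, aux_rank_eq_card_iff]
  intro v hv
  have key3 : (((Matrix.of (fun i j => w (i, j))).map
        (Polynomial.mapRingHom Complex.ofRealHom)).map (Polynomial.evalRingHom z))
      * rosenbrock A B C D z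
      = (Polynomial.evalRingHom z (Polynomial.mapRingHom Complex.ofRealHom q)) • 1 := by
    rw [← aux_eval_MP, ← Matrix.map_mul, key2, aux_map_smul_one]
  have h5 : ((((Matrix.of (fun i j => w (i, j))).map
        (Polynomial.mapRingHom Complex.ofRealHom)).map (Polynomial.evalRingHom z))
      * rosenbrock A B C D z) *ᵥ v = 0 := by
    rw [← Matrix.mulVec_mulVec, hv, Matrix.mulVec_zero]
  rw [key3] at h5
  have h6 : (Polynomial.evalRingHom z (Polynomial.mapRingHom Complex.ofRealHom q)) • v = 0 := by
    rw [← h5, Matrix.smul_mulVec, Matrix.one_mulVec]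
  rcases smul_eq_zero.mp h6 with h7 | h7
  · exact absurd h7 hz
  · exact h7

lemma aux_rank_to_fullF (z : ℂ) (h : (rosenbrock A B C D z).rank = n + m) :
    FullF A B C D := by
  classical
  intro v hv
  by_contra hvne
  have hc : Fintype.card (Fin n ⊕ Fin m) = n + m := by simp
  have hinj : ∀ u : (Fin n ⊕ Fin m) → ℂ, rosenbrock A B C D z *ᵥ u = 0 → u = 0 :=
    (aux_rank_eq_card_iff _).mp (by rw [h, hc])
  obtain ⟨w, q, hq, hw⟩ := aux_clear_denoms v
  have halgq : algebraMap (Polynomial ℝ) (RatFunc ℝ) q ≠ 0 := by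
    intro h0
    exact hq (RatFunc.algebraMap_injective ℝ (by simp [h0]))
  have h1 : auxMF A B C D *ᵥ (fun i => algebraMap (Polynomial ℝ) (RatFunc ℝ) (w i)) = 0 := by
    have he : (fun i => algebraMap (Polynomial ℝ) (RatFunc ℝ) (w i))
        = algebraMap (Polynomial ℝ) (RatFunc ℝ) q • v := by
      funext i; rw [hw i]; rfl
    rw [he, Matrix.mulVec_smul, hv, smul_zero]
  have h2 : auxMP A B C D *ᵥ w = 0 := by
    have h3 := aux_map_mulVec (algebraMap (Polynomial ℝ) (RatFunc ℝ)) (auxMP A B C D) w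
    funext i
    apply RatFunc.algebraMap_injective ℝ
    have h4 : (fun i => algebraMap (Polynomial ℝ) (RatFunc ℝ) ((auxMP A B C D *ᵥ w) i)) = 0 := by
      rw [← h3]; exact h1
    have := congrFun h4 i
    simpa using this
  obtain ⟨i0, hi0⟩ : ∃ i, v i ≠ 0 := Function.ne_iff.mp hvne
  have hwne : w i0 ≠ 0 := by
    intro h0
    apply hi0
    have h5 := hw i0
    rw [h0, map_zero] at h5
    rcases mul_eq_zero.mp h5.symm with h7 | h7
    · exact absurd h7 halgq
    · exact h7
  have h5 : (auxMP A B C D).map (Polynomial.mapRingHom Complex.ofRealHom) *ᵥ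
      (fun i => Polynomial.mapRingHom Complex.ofRealHom (w i)) = 0 := by
    rw [aux_map_mulVec (Polynomial.mapRingHom Complex.ofRealHom), h2]
    funext i; simp
  have hwcne : Polynomial.mapRingHom Complex.ofRealHom (w i0) ≠ 0 := by
    intro h0
    exact hwne (Polynomial.map_injective Complex.ofRealHom Complex.ofReal_injective (by
      simpa [Polynomial.coe_mapRingHom] using h0))
  obtain ⟨i₀, hi₀mem, hi₀min⟩ := Finset.exists_min_image
    (Finset.univ.filter fun i => Polynomial.mapRingHom Complex.ofRealHom (w i) ≠ 0)
    (fun i => rootMultiplicity z (Polynomial.mapRingHom Complex.ofRealHom (w i)))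
    ⟨i0, by simp only [Finset.mem_filter]; exact ⟨Finset.mem_univ _, hwcne⟩⟩
  rw [Finset.mem_filter] at hi₀mem
  have hdvd : ∀ i, (X - Polynomial.C z) ^
      (rootMultiplicity z (Polynomial.mapRingHom Complex.ofRealHom (w i₀)))
      ∣ Polynomial.mapRingHom Complex.ofRealHom (w i) := by
    intro i
    by_cases hwi : Polynomial.mapRingHom Complex.ofRealHom (w i) = 0
    · simp [hwi]
    · have hle := hi₀min i (by simp only [Finset.mem_filter]; exact ⟨Finset.mem_univ _, hwi⟩)
      exact dvd_trans (pow_dvd_pow _ hle) (Polynomial.pow_rootMultiplicity_dvd _ z)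
  have hspec : ∀ i, Polynomial.mapRingHom Complex.ofRealHom (w i)
      = (X - Polynomial.C z) ^
        (rootMultiplicity z (Polynomial.mapRingHom Complex.ofRealHom (w i₀)))
        * Classical.choose (hdvd i) :=
    fun i => Classical.choose_spec (hdvd i)
  have hXzk : (X - Polynomial.C z) ^
      (rootMultiplicity z (Polynomial.mapRingHom Complex.ofRealHom (w i₀))) ≠ 0 :=
    pow_ne_zero _ (Polynomial.X_sub_C_ne_zero z)
  have h6 : (auxMP A B C D).map (Polynomial.mapRingHom Complex.ofRealHom) *ᵥ
      (fun i => Classical.choose (hdvd i)) = 0 := by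
    have h7 : (X - Polynomial.C z) ^
        (rootMultiplicity z (Polynomial.mapRingHom Complex.ofRealHom (w i₀))) •
        ((auxMP A B C D).map (Polynomial.mapRingHom Complex.ofRealHom) *ᵥ
          (fun i => Classical.choose (hdvd i))) = 0 := by
      rw [← Matrix.mulVec_smul]
      have he : (X - Polynomial.C z) ^
          (rootMultiplicity z (Polynomial.mapRingHom Complex.ofRealHom (w i₀))) •
          (fun i => Classical.choose (hdvd i))
          = fun i => Polynomial.mapRingHom Complex.ofRealHom (w i) := by
        funext i
        simp only [Pi.smul_apply, smul_eq_mul]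
        exact (hspec i).symm
      rw [he, h5]
    funext i
    have h8 := congrFun h7 i
    simp only [Pi.smul_apply, smul_eq_mul, Pi.zero_apply] at h8
    rcases mul_eq_zero.mp h8 with h9 | h9
    · exact absurd h9 hXzk
    · exact h9
  have h8 : rosenbrock A B C D z *ᵥ
      (fun i => Polynomial.evalRingHom z (Classical.choose (hdvd i))) = 0 := by
    have h9 := aux_map_mulVec (Polynomial.evalRingHom z)
      ((auxMP A B C D).map (Polynomial.mapRingHom Complex.ofRealHom))
      (fun i => Classical.choose (hdvd i))
    rw [aux_eval_MP, h6] at h9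
    simp at h9; exact h9
  have h9 := hinj _ h8
  have h10 : Polynomial.eval z (Classical.choose (hdvd i₀)) ≠ 0 := by
    intro h0
    have hd1 : (X - Polynomial.C z) ∣ Classical.choose (hdvd i₀) :=
      Polynomial.dvd_iff_isRoot.mpr h0
    have hd2 : (X - Polynomial.C z) ^
        (rootMultiplicity z (Polynomial.mapRingHom Complex.ofRealHom (w i₀)) + 1)
        ∣ (X - Polynomial.C z) ^
          (rootMultiplicity z (Polynomial.mapRingHom Complex.ofRealHom (w i₀)))
          * Classical.choose (hdvd i₀) := by
      rw [pow_succ]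
      exact mul_dvd_mul_left _ hd1
    rw [← hspec i₀] at hd2
    have := (Polynomial.le_rootMultiplicity_iff hi₀mem.2).mpr hd2
    omega
  exact h10 (congrFun h9 i₀)

end LTI2

/-- The state trajectory driven by input `u` from zero initial state. -/
noncomputable def auxXi {n m : ℕ} (A : Matrix (Fin n) (Fin n) ℝ) (B : Matrix (Fin n) (Fin m) ℝ)
    (u : ℕ → Fin m → ℝ) : ℕ → (Fin n → ℝ)
  | 0 => 0
  | (j+1) => A *ᵥ auxXi A B u j + B *ᵥ u j

lemma aux_mulVec_finsum {n k : ℕ} {ι : Type*} (A : Matrix (Fin n) (Fin k) ℝ) (s : Finset ι)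
    (f : ι → Fin k → ℝ) : A *ᵥ (∑ i ∈ s, f i) = ∑ i ∈ s, A *ᵥ f i := by
  have := map_sum A.mulVecLin f s
  simpa only [Matrix.mulVecLin_apply] using this

lemma aux_auxXi_closed {n m : ℕ} (A : Matrix (Fin n) (Fin n) ℝ) (B : Matrix (Fin n) (Fin m) ℝ)
    (u : ℕ → Fin m → ℝ) (J : ℕ) :
    auxXi A B u J = ∑ k ∈ Finset.range J, (A ^ (J - k - 1) * B) *ᵥ u k := by
  induction J with
  | zero => simp [auxXi]
  | succ J ih =>
    rw [auxXi, ih, aux_mulVec_finsum, Finset.sum_range_succ]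
    congr 1
    · apply Finset.sum_congr rfl
      intro k hk
      rw [Finset.mem_range] at hk
      have he : J + 1 - k - 1 = (J - k - 1) + 1 := by omega
      rw [Matrix.mulVec_mulVec, he, pow_succ', Matrix.mul_assoc]
    · have h0 : J + 1 - J - 1 = 0 := by omega
      rw [h0, pow_zero, Matrix.one_mul]

section LTI3
variable {n m p : ℕ} (A : Matrix (Fin n) (Fin n) ℝ) (B : Matrix (Fin n) (Fin m) ℝ)
    (C : Matrix (Fin p) (Fin n) ℝ) (D : Matrix (Fin p) (Fin m) ℝ)

lemma aux_invMat_mulVec (L : ℕ) (u : ℕ → Fin m → ℝ) (j : Fin (L+1)) (s : Fin p) :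
    (invMat A B C D L *ᵥ (fun ic => u ic.1 ic.2)) (j, s)
      = (C *ᵥ auxXi A B u (j : ℕ) + D *ᵥ u (j : ℕ)) s := by
  classical
  set g : ℕ → ℝ := fun k =>
    if (j : ℕ) = k then (D *ᵥ u k) s
    else if k < (j : ℕ) then ((C * A ^ ((j : ℕ) - k - 1) * B) *ᵥ u k) s
    else 0 with hg
  have step1 : (invMat A B C D L *ᵥ (fun ic => u ic.1 ic.2)) (j, s)
      = ∑ i : Fin (L+1), g (i : ℕ) := by
    rw [Matrix.mulVec, dotProduct, Fintype.sum_prod_type]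
    apply Finset.sum_congr rfl
    intro i _
    rw [hg]
    by_cases h1 : (j : ℕ) = (i : ℕ)
    · simp only [invMat, h1, if_pos rfl]
      simp [Matrix.mulVec, dotProduct]
    · by_cases h2 : (i : ℕ) < (j : ℕ)
      · simp only [invMat, if_neg h1, if_pos h2]
        simp [Matrix.mulVec, dotProduct]
      · simp only [invMat, if_neg h1, if_neg h2]
        simp
  have step2 := Fin.sum_univ_eq_sum_range g (L+1)
  rw [step1, step2]
  have hsub : Finset.range ((j : ℕ) + 1) ⊆ Finset.range (L + 1) := by
    apply Finset.range_subset_range.mpr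
    omega
  rw [← Finset.sum_subset hsub]
  · rw [Finset.sum_range_succ]
    have hgj : g (j : ℕ) = (D *ᵥ u (j : ℕ)) s := by rw [hg]; simp
    have hrest : ∀ k ∈ Finset.range (j : ℕ),
        g k = ((C * A ^ ((j : ℕ) - k - 1) * B) *ᵥ u k) s := by
      intro k hk
      rw [Finset.mem_range] at hk
      rw [hg]
      simp only
      rw [if_neg (by omega), if_pos hk]
    rw [Finset.sum_congr rfl hrest, hgj]
    have hxi : (C *ᵥ auxXi A B u (j : ℕ)) s
        = ∑ k ∈ Finset.range (j : ℕ), ((C * A ^ ((j : ℕ) - k - 1) * B) *ᵥ u k) s := by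
      rw [aux_auxXi_closed, aux_mulVec_finsum, Finset.sum_apply]
      apply Finset.sum_congr rfl
      intro k _
      rw [Matrix.mulVec_mulVec, ← Matrix.mul_assoc]
    rw [Pi.add_apply, hxi]
  · intro k hk1 hk2
    rw [Finset.mem_range] at hk1
    rw [Finset.mem_range] at hk2
    rw [hg]
    simp only
    rw [if_neg (by omega), if_neg (by omega)]

lemma aux_idZero_mulVec (L : ℕ) (U : Fin (L+1) × Fin m → ℝ) (r : Fin m) :
    (idZero m L *ᵥ U) r = U (0, r) := by
  classical
  rw [Matrix.mulVec, dotProduct]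
  have key : ∀ ic : Fin (L+1) × Fin m,
      idZero m L r ic * U ic = if ic = ((0 : Fin (L+1)), r) then U ic else 0 := by
    intro ic
    show (if (ic.1 : ℕ) = 0 ∧ r = ic.2 then (1:ℝ) else 0) * U ic = _
    by_cases h : (ic.1 : ℕ) = 0 ∧ r = ic.2
    · rw [if_pos h, one_mul, if_pos]
      obtain ⟨h1, h2⟩ := h
      refine Prod.ext (Fin.ext (by simpa using h1)) h2.symm
    · rw [if_neg h, zero_mul, if_neg]
      intro hc
      apply h
      rw [hc]
      exact ⟨rfl, rfl⟩
  rw [Finset.sum_congr rfl (fun ic _ => key ic), Finset.sum_ite_eq' Finset.univ]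
  simp

end LTI3

lemma aux_detXK {k : ℕ} (K : Matrix (Fin k) (Fin k) ℝ) :
    ((X : Polynomial ℝ) • (1 : Matrix (Fin k) (Fin k) (Polynomial ℝ)) - K.map Polynomial.C).det ≠ 0 := by
  have he : (X : Polynomial ℝ) • (1 : Matrix (Fin k) (Fin k) (Polynomial ℝ)) - K.map Polynomial.C
      = charmatrix K := by
    ext i j
    simp [Matrix.charmatrix_apply, Matrix.smul_apply, Matrix.one_apply, Matrix.diagonal,
      Matrix.map_apply, Matrix.sub_apply, Matrix.of_apply, mul_ite, mul_one, mul_zero]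
  rw [he]
  exact (Matrix.charpoly_monic K).ne_zero

lemma aux_detAX {k : ℕ} (K : Matrix (Fin k) (Fin k) ℝ) :
    (K.map Polynomial.C - (X : Polynomial ℝ) • 1).det ≠ 0 := by
  have he : K.map Polynomial.C - (X : Polynomial ℝ) • 1
      = -((X : Polynomial ℝ) • (1 : Matrix (Fin k) (Fin k) (Polynomial ℝ)) - K.map Polynomial.C) := by
    rw [neg_sub]
  rw [he, Matrix.det_neg]
  apply mul_ne_zero
  · exact pow_ne_zero _ (neg_ne_zero.mpr one_ne_zero)
  · exact aux_detXK K

lemma aux_polyMat_injF {k : ℕ} (Mp : Matrix (Fin k) (Fin k) (Polynomial ℝ)) (hdet : Mp.det ≠ 0) :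
    ∀ v : Fin k → RatFunc ℝ, (Mp.map (algebraMap (Polynomial ℝ) (RatFunc ℝ))) *ᵥ v = 0 → v = 0 := by
  intro v hv
  have hdu : IsUnit ((Mp.map (algebraMap (Polynomial ℝ) (RatFunc ℝ))).det) := by
    rw [isUnit_iff_ne_zero]
    have : (Mp.map (algebraMap (Polynomial ℝ) (RatFunc ℝ))).det
        = algebraMap (Polynomial ℝ) (RatFunc ℝ) Mp.det := by
      rw [RingHom.map_det]
      rfl
    rw [this]
    intro h0
    exact hdet (RatFunc.algebraMap_injective ℝ (by simp [h0]))
  have h1 := congrArg (fun y => (Mp.map (algebraMap (Polynomial ℝ) (RatFunc ℝ)))⁻¹ *ᵥ y) hv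
  simp only [Matrix.mulVec_mulVec, Matrix.nonsing_inv_mul _ hdu, Matrix.one_mulVec,
    Matrix.mulVec_zero] at h1
  exact h1

lemma aux_polyMat_injP {k : ℕ} (Mp : Matrix (Fin k) (Fin k) (Polynomial ℝ)) (hdet : Mp.det ≠ 0)
    (x : Fin k → Polynomial ℝ) (hx : Mp *ᵥ x = 0) : x = 0 := by
  have h1 := aux_map_mulVec (algebraMap (Polynomial ℝ) (RatFunc ℝ)) Mp x
  rw [hx] at h1
  have h2 := aux_polyMat_injF Mp hdet _ (by rw [h1]; funext i; simp)
  funext i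
  have := congrFun h2 i
  exact RatFunc.algebraMap_injective ℝ (by simpa using this)

lemma aux_coeff_mulVec {ι κ : Type*} [Fintype κ] (M : Matrix ι κ ℝ) (xp : κ → Polynomial ℝ)
    (k : ℕ) (i : ι) :
    ((M.map Polynomial.C *ᵥ xp) i).coeff k = (M *ᵥ fun j => (xp j).coeff k) i := by
  simp [Matrix.mulVec, dotProduct, Polynomial.finset_sum_coeff, Polynomial.coeff_C_mul,
    Matrix.map_apply]

section LTI4
variable {n m p : ℕ} (A : Matrix (Fin n) (Fin n) ℝ) (B : Matrix (Fin n) (Fin m) ℝ)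
    (C : Matrix (Fin p) (Fin n) ℝ) (D : Matrix (Fin p) (Fin m) ℝ)

lemma aux_kernel_poly (v : Fin n ⊕ Fin m → RatFunc ℝ) (hv : auxMF A B C D *ᵥ v = 0)
    (hvne : v ≠ 0) :
    ∃ w : Fin n ⊕ Fin m → Polynomial ℝ, w ≠ 0 ∧ auxMP A B C D *ᵥ w = 0 := by
  obtain ⟨w, q, hq, hw⟩ := aux_clear_denoms v
  have halgq : algebraMap (Polynomial ℝ) (RatFunc ℝ) q ≠ 0 := by
    intro h0
    exact hq (RatFunc.algebraMap_injective ℝ (by simp [h0]))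
  have h1 : auxMF A B C D *ᵥ (fun i => algebraMap (Polynomial ℝ) (RatFunc ℝ) (w i)) = 0 := by
    have he : (fun i => algebraMap (Polynomial ℝ) (RatFunc ℝ) (w i))
        = algebraMap (Polynomial ℝ) (RatFunc ℝ) q • v := by
      funext i; rw [hw i]; rfl
    rw [he, Matrix.mulVec_smul, hv, smul_zero]
  have h2 : auxMP A B C D *ᵥ w = 0 := by
    have h3 := aux_map_mulVec (algebraMap (Polynomial ℝ) (RatFunc ℝ)) (auxMP A B C D) w
    funext i
    apply RatFunc.algebraMap_injective ℝ
    have h4 : (fun i => algebraMap (Polynomial ℝ) (RatFunc ℝ) ((auxMP A B C D *ᵥ w) i)) = 0 := by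
      rw [← h3]; exact h1
    have := congrFun h4 i
    simpa using this
  refine ⟨w, ?_, h2⟩
  obtain ⟨i0, hi0⟩ : ∃ i, v i ≠ 0 := Function.ne_iff.mp hvne
  intro h0
  apply hi0
  have h5 := hw i0
  rw [h0] at h5
  simp only [Pi.zero_apply, map_zero] at h5
  rcases mul_eq_zero.mp h5.symm with h7 | h7
  · exact absurd h7 halgq
  · exact h7

lemma aux_leftinv_to_fullF (L : ℕ) (P : Matrix (Fin m) (Fin (L+1) × Fin p) ℝ)
    (hP : P * invMat A B C D L = idZero m L) : FullF A B C D := by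
  classical
  intro v hv
  by_contra hvne
  obtain ⟨w, hwne, h2⟩ := aux_kernel_poly A B C D v hv hvne
  unfold auxMP at h2
  rw [Matrix.fromBlocks_mulVec] at h2
  have hrow1 : ((A.map Polynomial.C - (X : Polynomial ℝ) • 1) *ᵥ (w ∘ Sum.inl))
      + ((B.map Polynomial.C) *ᵥ (w ∘ Sum.inr)) = 0 := by
    funext i
    have := congrFun h2 (Sum.inl i)
    simpa using this
  have hrow2 : ((C.map Polynomial.C) *ᵥ (w ∘ Sum.inl))
      + ((D.map Polynomial.C) *ᵥ (w ∘ Sum.inr)) = 0 := by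
    funext i
    have := congrFun h2 (Sum.inr i)
    simpa using this
  -- coefficient sequences
  set xc : ℕ → Fin n → ℝ := fun k i => (w (Sum.inl i)).coeff k with hxcdef
  set uc : ℕ → Fin m → ℝ := fun k c => (w (Sum.inr c)).coeff k with hucdef
  have hXentry : ∀ (y : Fin n → Polynomial ℝ) (i : Fin n),
      ((((X : Polynomial ℝ) • (1 : Matrix (Fin n) (Fin n) (Polynomial ℝ))) *ᵥ y) i)
        = X * y i := by
    intro y i
    rw [Matrix.smul_mulVec, Matrix.one_mulVec]
    rfl
  have rel2 : ∀ k, C *ᵥ xc k + D *ᵥ uc k = 0 := by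
    intro k
    funext s
    have h3 := congrFun hrow2 s
    have h4 := congrArg (fun q : Polynomial ℝ => q.coeff k) h3
    simp only [Pi.add_apply, Polynomial.coeff_add, Pi.zero_apply, Polynomial.coeff_zero] at h4
    rw [aux_coeff_mulVec, aux_coeff_mulVec] at h4
    exact h4
  have rel1 : ∀ k i, (A *ᵥ xc k) i - (X * (w (Sum.inl i))).coeff k + (B *ᵥ uc k) i = 0 := by
    intro k i
    have h3 := congrFun hrow1 i
    have h4 := congrArg (fun q : Polynomial ℝ => q.coeff k) h3
    simp only [Pi.add_apply, Polynomial.coeff_add, Pi.zero_apply, Polynomial.coeff_zero,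
      Matrix.sub_mulVec, Pi.sub_apply, Polynomial.coeff_sub] at h4
    rw [aux_coeff_mulVec] at h4
    rw [hXentry] at h4
    have h5 := congrArg (fun q : Polynomial ℝ => q.coeff k) (rfl : (X * (w (Sum.inl i))) = _)
    -- h4 : (A *ᵥ xc k) i - (X * w (inl i)).coeff k + (B *ᵥ uc k) i = 0
    rw [aux_coeff_mulVec] at h4
    exact h4
  have rel1a : A *ᵥ xc 0 + B *ᵥ uc 0 = 0 := by
    funext i
    have := rel1 0 i
    rw [Polynomial.mul_coeff_zero, Polynomial.coeff_X_zero, zero_mul, sub_zero] at this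
    exact this
  have rel1b : ∀ k, A *ᵥ xc (k+1) + B *ᵥ uc (k+1) = xc k := by
    intro k
    funext i
    have := rel1 (k+1) i
    rw [Polynomial.coeff_X_mul] at this
    have : (A *ᵥ xc (k+1)) i + (B *ᵥ uc (k+1)) i = (w (Sum.inl i)).coeff k := by linarith
    exact this
  -- u-part is nonzero
  have hupne : ∃ c, w (Sum.inr c) ≠ 0 := by
    by_contra h0
    push_neg at h0
    have hu0 : (w ∘ Sum.inr) = 0 := funext fun c => h0 c
    have hx0 : (A.map Polynomial.C - (X : Polynomial ℝ) • 1) *ᵥ (w ∘ Sum.inl) = 0 := by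
      have := hrow1
      rw [hu0, Matrix.mulVec_zero, add_zero] at this
      exact this
    have := aux_polyMat_injP _ (aux_detAX A) _ hx0
    apply hwne
    funext i
    rcases i with i | c
    · exact congrFun this i
    · exact congrFun hu0 c
  -- the top nonzero coefficient index N of u
  obtain ⟨c0, hc0⟩ := hupne
  set Du : ℕ := Finset.univ.sup (fun c => (w (Sum.inr c)).natDegree) with hDu
  have hS : ((Finset.range (Du + 1)).filter (fun k => uc k ≠ 0)).Nonempty := by
    refine ⟨(w (Sum.inr c0)).natDegree, ?_⟩
    rw [Finset.mem_filter, Finset.mem_range]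
    constructor
    · have h9 : (w (Sum.inr c0)).natDegree ≤ Du :=
        Finset.le_sup (f := fun c => (w (Sum.inr c)).natDegree) (Finset.mem_univ c0)
      omega
    · intro h0
      have := congrFun h0 c0
      simp only [Pi.zero_apply] at this
      exact (Polynomial.leadingCoeff_ne_zero.mpr hc0) this
  set N : ℕ := ((Finset.range (Du + 1)).filter (fun k => uc k ≠ 0)).max' hS with hNdef
  have hNmem := ((Finset.range (Du + 1)).filter (fun k => uc k ≠ 0)).max'_mem hS
  rw [Finset.mem_filter] at hNmem
  have hucN : uc N ≠ 0 := hNmem.2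
  have hucgt : ∀ k, N < k → uc k = 0 := by
    intro k hk
    by_contra h0
    rcases le_or_gt k Du with hle | hlt
    · have hmem : k ∈ (Finset.range (Du + 1)).filter (fun k => uc k ≠ 0) := by
        rw [Finset.mem_filter, Finset.mem_range]
        exact ⟨by omega, h0⟩
      have := Finset.le_max' _ k hmem
      omega
    · apply h0
      funext c
      apply Polynomial.coeff_eq_zero_of_natDegree_lt
      have h9 : (w (Sum.inr c)).natDegree ≤ Du :=
        Finset.le_sup (f := fun c => (w (Sum.inr c)).natDegree) (Finset.mem_univ c)
      omega
  -- x coefficients vanish from N on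
  have hstep : ∀ t k, N ≤ k → xc k = (A ^ t) *ᵥ xc (k + t) := by
    intro t
    induction t with
    | zero =>
      intro k _
      rw [pow_zero, Matrix.one_mulVec, Nat.add_zero]
    | succ t ih =>
      intro k hk
      have h3 : uc (k+1) = 0 := hucgt _ (by omega)
      have h4 := rel1b k
      rw [h3, Matrix.mulVec_zero, add_zero] at h4
      rw [← h4, ih (k+1) (by omega), Matrix.mulVec_mulVec, ← pow_succ']
      have : k + 1 + t = k + (t+1) := by omega
      rw [this]
  have hxc0 : ∀ k, N ≤ k → xc k = 0 := by
    intro k hk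
    set Dx : ℕ := Finset.univ.sup (fun i => (w (Sum.inl i)).natDegree) with hDx
    have hbig : xc (k + (Dx + 1)) = 0 := by
      funext i
      apply Polynomial.coeff_eq_zero_of_natDegree_lt
      have h9 : (w (Sum.inl i)).natDegree ≤ Dx :=
        Finset.le_sup (f := fun i => (w (Sum.inl i)).natDegree) (Finset.mem_univ i)
      omega
    rw [hstep (Dx + 1) k hk, hbig, Matrix.mulVec_zero]
  -- reversed input
  set ubar : ℕ → Fin m → ℝ := fun jj => if jj ≤ N then uc (N - jj) else 0 with hubar
  have hxi : ∀ jj, jj ≤ N → auxXi A B ubar jj = xc (N - jj) := by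
    intro jj
    induction jj with
    | zero =>
      intro _
      show (0 : Fin n → ℝ) = xc N
      rw [hxc0 N (le_refl N)]
    | succ jj ih =>
      intro hjj
      have hjj' : jj ≤ N := by omega
      show A *ᵥ auxXi A B ubar jj + B *ᵥ ubar jj = xc (N - (jj+1))
      rw [ih hjj', hubar]
      simp only [if_pos hjj']
      have h4 := rel1b (N - jj - 1)
      have he1 : N - jj - 1 + 1 = N - jj := by omega
      have he2 : N - (jj + 1) = N - jj - 1 := by omega
      rw [he1] at h4
      rw [he2, h4]
  have hxiN1 : auxXi A B ubar (N + 1) = 0 := by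
    show A *ᵥ auxXi A B ubar N + B *ᵥ ubar N = 0
    rw [hxi N (le_refl N), Nat.sub_self, hubar]
    simp only [if_pos (le_refl N), Nat.sub_self]
    exact rel1a
  have hxibig : ∀ jj, N < jj → auxXi A B ubar jj = 0 := by
    intro jj
    induction jj with
    | zero => omega
    | succ jj ih =>
      intro hjj
      rcases Nat.lt_or_ge N jj with h5 | h5
      · show A *ᵥ auxXi A B ubar jj + B *ᵥ ubar jj = 0
        rw [ih h5, hubar]
        simp only [if_neg (by omega : ¬ jj ≤ N)]
        rw [Matrix.mulVec_zero, Matrix.mulVec_zero, add_zero]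
      · have : jj = N := by omega
        rw [this]
        exact hxiN1
  have hout : ∀ jj, C *ᵥ auxXi A B ubar jj + D *ᵥ ubar jj = 0 := by
    intro jj
    rcases le_or_gt jj N with h5 | h5
    · rw [hxi jj h5, hubar]
      simp only [if_pos h5]
      exact rel2 (N - jj)
    · rw [hxibig jj h5, hubar]
      simp only [if_neg (by omega : ¬ jj ≤ N)]
      rw [Matrix.mulVec_zero, Matrix.mulVec_zero, add_zero]
  -- stack and contradict
  have hIU : invMat A B C D L *ᵥ (fun ic => ubar ic.1 ic.2) = 0 := by
    funext js
    obtain ⟨j, s⟩ := js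
    rw [aux_invMat_mulVec]
    exact congrFun (hout (j : ℕ)) s
  have hid : idZero m L *ᵥ (fun ic => ubar ic.1 ic.2) = 0 := by
    rw [← hP, ← Matrix.mulVec_mulVec, hIU, Matrix.mulVec_zero]
  apply hucN
  funext r
  have h6 := congrFun hid r
  rw [aux_idZero_mulVec] at h6
  have h7 : ubar ((0 : Fin (L+1)) : ℕ) r = 0 := h6
  rw [hubar] at h7
  simp only [Fin.val_zero, if_pos (Nat.zero_le N), Nat.sub_zero] at h7
  exact h7

end LTI4

section LTI5
variable {n m p : ℕ} (A : Matrix (Fin n) (Fin n) ℝ) (B : Matrix (Fin n) (Fin m) ℝ)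
    (C : Matrix (Fin p) (Fin n) ℝ) (D : Matrix (Fin p) (Fin m) ℝ)

noncomputable def auxOut : ((Fin n → ℝ) × (Fin m → ℝ)) →ₗ[ℝ] (Fin p → ℝ) :=
  C.mulVecLin ∘ₗ LinearMap.fst ℝ (Fin n → ℝ) (Fin m → ℝ)
    + D.mulVecLin ∘ₗ LinearMap.snd ℝ (Fin n → ℝ) (Fin m → ℝ)

noncomputable def auxNext : ((Fin n → ℝ) × (Fin m → ℝ)) →ₗ[ℝ] (Fin n → ℝ) :=
  A.mulVecLin ∘ₗ LinearMap.fst ℝ (Fin n → ℝ) (Fin m → ℝ)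
    + B.mulVecLin ∘ₗ LinearMap.snd ℝ (Fin n → ℝ) (Fin m → ℝ)

noncomputable def auxPhi (W : Submodule ℝ (Fin n → ℝ)) : Submodule ℝ (Fin n → ℝ) :=
  Submodule.map (LinearMap.fst ℝ (Fin n → ℝ) (Fin m → ℝ))
    (LinearMap.ker (auxOut C D) ⊓ Submodule.comap (auxNext A B) W)

lemma aux_mem_phi {W : Submodule ℝ (Fin n → ℝ)} {x : Fin n → ℝ} :
    x ∈ auxPhi A B C D W ↔ ∃ u, C *ᵥ x + D *ᵥ u = 0 ∧ A *ᵥ x + B *ᵥ u ∈ W := by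
  constructor
  · rintro ⟨⟨a, b⟩, hmem, h3⟩
    have ha : a = x := h3
    subst ha
    simp only [SetLike.mem_coe, Submodule.mem_inf, LinearMap.mem_ker,
      Submodule.mem_comap] at hmem
    obtain ⟨h1, h2⟩ := hmem
    refine ⟨b, ?_, ?_⟩
    · have he : auxOut C D (a, b) = C *ᵥ a + D *ᵥ b := by
        simp [auxOut, Matrix.mulVecLin_apply]
      rwa [he] at h1
    · have he : auxNext A B (a, b) = A *ᵥ a + B *ᵥ b := by
        simp [auxNext, Matrix.mulVecLin_apply]
      rwa [he] at h2
  · rintro ⟨u, h1, h2⟩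
    refine ⟨(x, u), ?_, rfl⟩
    simp only [SetLike.mem_coe, Submodule.mem_inf, LinearMap.mem_ker, Submodule.mem_comap]
    constructor
    · have he : auxOut C D (x, u) = C *ᵥ x + D *ᵥ u := by
        simp [auxOut, Matrix.mulVecLin_apply]
      rw [he, h1]
    · have he : auxNext A B (x, u) = A *ᵥ x + B *ᵥ u := by
        simp [auxNext, Matrix.mulVecLin_apply]
      rw [he]
      exact h2

lemma aux_phi_mono {W₁ W₂ : Submodule ℝ (Fin n → ℝ)} (h : W₁ ≤ W₂) :
    auxPhi A B C D W₁ ≤ auxPhi A B C D W₂ :=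
  Submodule.map_mono (inf_le_inf le_rfl (Submodule.comap_mono h))

noncomputable def auxV : ℕ → Submodule ℝ (Fin n → ℝ)
  | 0 => ⊤
  | (L+1) => auxPhi A B C D (auxV L)

lemma aux_V_antitone : ∀ L, auxV A B C D (L+1) ≤ auxV A B C D L := by
  intro L
  induction L with
  | zero => exact le_top
  | succ L ih => exact aux_phi_mono A B C D ih

lemma aux_V_stab : auxV A B C D n = auxV A B C D (n+1) := by
  classical
  have hex : ∃ k, k ≤ n ∧ auxV A B C D k = auxV A B C D (k+1) := by
    by_contra h0
    push_neg at h0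
    have hrank : ∀ k, k ≤ n + 1 →
        Module.finrank ℝ (auxV A B C D k) + k ≤ n := by
      intro k
      induction k with
      | zero =>
        intro _
        have : Module.finrank ℝ (auxV A B C D 0) = n := by
          show Module.finrank ℝ (⊤ : Submodule ℝ (Fin n → ℝ)) = n
          rw [finrank_top]
          simp [Module.finrank_fintype_fun_eq_card]
        omega
      | succ k ih =>
        intro hk
        have hlt : auxV A B C D (k+1) < auxV A B C D k :=
          lt_of_le_of_ne (aux_V_antitone A B C D k) (fun he => h0 k (by omega) he.symm)
        have := Submodule.finrank_lt_finrank_of_lt hlt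
        have h5 := ih (by omega)
        omega
    have := hrank (n+1) (le_refl _)
    omega
  obtain ⟨k, hk, heq⟩ := hex
  have hprop : ∀ j, k ≤ j → auxV A B C D j = auxV A B C D k := by
    intro j hj
    induction j, hj using Nat.le_induction with
    | base => rfl
    | succ j hj ih =>
      show auxPhi A B C D (auxV A B C D j) = _
      rw [ih]
      exact heq.symm
  rw [hprop n hk, hprop (n+1) (by omega)]

noncomputable def auxS : Submodule ℝ ((Fin n → ℝ) × (Fin m → ℝ)) :=
  LinearMap.ker (auxOut C D) ⊓ Submodule.comap (auxNext A B) (auxV A B C D n)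

noncomputable def auxT : (auxS A B C D) →ₗ[ℝ] (Fin n → ℝ) :=
  (LinearMap.fst ℝ (Fin n → ℝ) (Fin m → ℝ)) ∘ₗ (auxS A B C D).subtype

lemma aux_range_T : LinearMap.range (auxT A B C D) = auxV A B C D n := by
  unfold auxT
  rw [LinearMap.range_comp, Submodule.range_subtype]
  have h1 : Submodule.map (LinearMap.fst ℝ (Fin n → ℝ) (Fin m → ℝ)) (auxS A B C D)
      = auxV A B C D (n+1) := rfl
  rw [h1, ← aux_V_stab]

lemma aux_friend : ∃ Fm : Matrix (Fin m) (Fin n) ℝ, ∀ x ∈ auxV A B C D n,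
    C *ᵥ x + D *ᵥ (Fm *ᵥ x) = 0 ∧ A *ᵥ x + B *ᵥ (Fm *ᵥ x) ∈ auxV A B C D n := by
  classical
  obtain ⟨s, hs⟩ := (auxT A B C D).rangeRestrict.exists_rightInverse_of_surjective
    (LinearMap.range_rangeRestrict (auxT A B C D))
  obtain ⟨Fh, hFh⟩ := LinearMap.exists_extend
    ((LinearMap.snd ℝ (Fin n → ℝ) (Fin m → ℝ)) ∘ₗ (auxS A B C D).subtype ∘ₗ s)
  refine ⟨LinearMap.toMatrix' Fh, ?_⟩
  intro x hx
  have hx' : x ∈ LinearMap.range (auxT A B C D) := by rw [aux_range_T]; exact hx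
  have hFx : (LinearMap.toMatrix' Fh) *ᵥ x = Fh x := by
    rw [← Matrix.toLin'_apply, Matrix.toLin'_toMatrix']
  have hTy : auxT A B C D (s ⟨x, hx'⟩) = x := by
    have h1 := congrArg
      (fun t : LinearMap.range (auxT A B C D) →ₗ[ℝ] LinearMap.range (auxT A B C D) =>
        t ⟨x, hx'⟩) hs
    exact congrArg Subtype.val h1
  have hFhx : Fh x = ((s ⟨x, hx'⟩ : auxS A B C D) : (Fin n → ℝ) × (Fin m → ℝ)).2 := by
    have h1 := congrArg
      (fun t : LinearMap.range (auxT A B C D) →ₗ[ℝ] (Fin m → ℝ) => t ⟨x, hx'⟩) hFh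
    exact h1
  have hmem := (s ⟨x, hx'⟩).2
  have hmem2 : ((s ⟨x, hx'⟩ : auxS A B C D) : (Fin n → ℝ) × (Fin m → ℝ))
      ∈ LinearMap.ker (auxOut C D) ⊓
        Submodule.comap (auxNext A B) (auxV A B C D n) := hmem
  obtain ⟨hk1, hk2⟩ := Submodule.mem_inf.mp hmem2
  rw [LinearMap.mem_ker] at hk1
  rw [Submodule.mem_comap] at hk2
  have hy1 : ((s ⟨x, hx'⟩ : auxS A B C D) : (Fin n → ℝ) × (Fin m → ℝ)).1 = x := hTy
  have he1 : ∀ q : (Fin n → ℝ) × (Fin m → ℝ), auxOut C D q = C *ᵥ q.1 + D *ᵥ q.2 := by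
    intro q; simp [auxOut, Matrix.mulVecLin_apply]
  have he2 : ∀ q : (Fin n → ℝ) × (Fin m → ℝ), auxNext A B q = A *ᵥ q.1 + B *ᵥ q.2 := by
    intro q; simp [auxNext, Matrix.mulVecLin_apply]
  rw [he1, hy1] at hk1
  rw [he2, hy1] at hk2
  rw [hFx, hFhx]
  exact ⟨hk1, hk2⟩

end LTI5

noncomputable def auxphiR : ℝ →+* RatFunc ℝ :=
  (algebraMap (Polynomial ℝ) (RatFunc ℝ)).comp (Polynomial.C : ℝ →+* Polynomial ℝ)

lemma aux_phiR_inj : Function.Injective (auxphiR : ℝ → RatFunc ℝ) := by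
  intro a b hab
  exact Polynomial.C_injective (RatFunc.algebraMap_injective ℝ hab)

lemma aux_XK_map {k : ℕ} (K : Matrix (Fin k) (Fin k) ℝ) :
    (((X : Polynomial ℝ) • (1 : Matrix (Fin k) (Fin k) (Polynomial ℝ)) - K.map Polynomial.C).map
      (algebraMap (Polynomial ℝ) (RatFunc ℝ)))
    = (algebraMap (Polynomial ℝ) (RatFunc ℝ) X) • (1 : Matrix (Fin k) (Fin k) (RatFunc ℝ))
      - K.map auxphiR := by
  ext i j
  simp only [Matrix.map_apply, Matrix.sub_apply, Matrix.smul_apply, Matrix.one_apply,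
    smul_eq_mul, map_sub, _root_.map_mul, auxphiR, RingHom.comp_apply]
  by_cases h : i = j <;> simp [h]

/-- Span-membership transport for real matrices acting on complexified spans. -/
lemma aux_span_induct {a b : ℕ} (M : Matrix (Fin b) (Fin a) ℝ) (V0 : Submodule ℝ (Fin a → ℝ))
    (V1 : Submodule ℝ (Fin b → ℝ)) (hgen : ∀ r ∈ V0, M *ᵥ r ∈ V1) :
    ∀ w ∈ Submodule.span (RatFunc ℝ)
        ((fun r : Fin a → ℝ => fun i => auxphiR (r i)) '' (V0 : Set (Fin a → ℝ))),
      (M.map auxphiR) *ᵥ w ∈ Submodule.span (RatFunc ℝ)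
        ((fun r : Fin b → ℝ => fun i => auxphiR (r i)) '' (V1 : Set (Fin b → ℝ))) := by
  intro w hw
  induction hw using Submodule.span_induction with
  | mem x hx =>
    obtain ⟨r, hr, rfl⟩ := hx
    rw [aux_map_mulVec]
    exact Submodule.subset_span ⟨M *ᵥ r, hgen r hr, rfl⟩
  | zero =>
    rw [Matrix.mulVec_zero]
    exact Submodule.zero_mem _
  | add x y hx hy ihx ihy =>
    rw [Matrix.mulVec_add]
    exact Submodule.add_mem _ ihx ihy
  | smul c x hx ihx =>
    rw [Matrix.mulVec_smul]
    exact Submodule.smul_mem _ c ihx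

lemma aux_span_bot {b : ℕ} :
    Submodule.span (RatFunc ℝ)
      ((fun r : Fin b → ℝ => fun i => auxphiR (r i)) ''
        ((⊥ : Submodule ℝ (Fin b → ℝ)) : Set (Fin b → ℝ))) = ⊥ := by
  rw [Submodule.span_eq_bot]
  rintro x ⟨r, hr, rfl⟩
  have h0 : r = 0 := by
    simpa [Submodule.mem_bot] using hr
  subst h0
  funext i
  simp

section LTI6
variable {n m p : ℕ} (A : Matrix (Fin n) (Fin n) ℝ) (B : Matrix (Fin n) (Fin m) ℝ)
    (C : Matrix (Fin p) (Fin n) ℝ) (D : Matrix (Fin p) (Fin m) ℝ)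

lemma aux_MF_blocks :
    auxMF A B C D = Matrix.fromBlocks
      (A.map auxphiR - (algebraMap (Polynomial ℝ) (RatFunc ℝ) X) • 1)
      (B.map auxphiR) (C.map auxphiR) (D.map auxphiR) := by
  ext i j
  rcases i with i | i <;> rcases j with j | j <;>
    simp only [auxMF, auxMP, Matrix.map_apply, Matrix.fromBlocks_apply₁₁,
      Matrix.fromBlocks_apply₁₂, Matrix.fromBlocks_apply₂₁, Matrix.fromBlocks_apply₂₂,
      Matrix.sub_apply, Matrix.smul_apply, Matrix.one_apply, smul_eq_mul,
      auxphiR, RingHom.comp_apply, map_sub, _root_.map_mul] <;>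
    first
      | (by_cases hij : i = j <;> simp [hij])
      | rfl

lemma aux_fullF_to_leftinv (h : FullF A B C D) :
    ∃ L : ℕ, L ≤ n ∧ ∃ P : Matrix (Fin m) (Fin (L + 1) × Fin p) ℝ,
      P * invMat A B C D L = idZero m L := by
  classical
  refine ⟨n, le_refl n, ?_⟩
  apply aux_exists_left_factor
  intro U hU
  suffices hU0 : (fun c => U ((0 : Fin (n+1)), c)) = 0 by
    funext r
    rw [aux_idZero_mulVec]
    exact congrFun hU0 r
  by_contra hu0ne
  -- the finite input sequence
  set du : ℕ → Fin m → ℝ := fun k c => if hk : k < n + 1 then U (⟨k, hk⟩, c) else 0 with hdu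
  have hUdu : (fun ic : Fin (n+1) × Fin m => du (ic.1 : ℕ) ic.2) = U := by
    funext ic
    rw [hdu]
    simp only
    rw [dif_pos ic.1.isLt]
  have hout : ∀ j : Fin (n+1), C *ᵥ auxXi A B du (j : ℕ) + D *ᵥ du (j : ℕ) = 0 := by
    intro j
    funext s
    have h1 := congrFun hU (j, s)
    rw [← hUdu, aux_invMat_mulVec] at h1
    exact h1
  have hdu0 : du 0 = fun c => U (0, c) := by
    funext c
    rw [hdu]
    simp only
    rw [dif_pos (by omega : (0:ℕ) < n+1)]
    congr
  have hdu0ne : du 0 ≠ 0 := by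
    rw [hdu0]
    exact hu0ne
  have hD0 : D *ᵥ du 0 = 0 := by
    have h1 := hout 0
    have h2 : auxXi A B du ((0 : Fin (n+1)) : ℕ) = 0 := rfl
    rwa [h2, Matrix.mulVec_zero, zero_add] at h1
  -- membership of the first state in V_n
  have hmem : ∀ d jj, jj + d = n → auxXi A B du (jj + 1) ∈ auxV A B C D d := by
    intro d
    induction d with
    | zero =>
      intro jj _
      exact Submodule.mem_top
    | succ d ih =>
      intro jj hjj
      show _ ∈ auxPhi A B C D (auxV A B C D d)
      rw [aux_mem_phi]
      refine ⟨du (jj + 1), ?_, ?_⟩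
      · have h9 := hout ⟨jj + 1, by omega⟩
        exact h9
      · have h2 : A *ᵥ auxXi A B du (jj + 1) + B *ᵥ du (jj + 1) = auxXi A B du (jj + 2) := rfl
        rw [h2]
        exact ih (jj + 1) (by omega)
  have hBmem : B *ᵥ du 0 ∈ auxV A B C D n := by
    have h1 := hmem n 0 (by omega)
    have h2 : auxXi A B du 1 = B *ᵥ du 0 := by
      show A *ᵥ (0 : Fin n → ℝ) + B *ᵥ du 0 = B *ᵥ du 0
      rw [Matrix.mulVec_zero, zero_add]
    rwa [h2] at h1
  -- friend matrix
  obtain ⟨Fm, hFm⟩ := aux_friend A B C D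
  set K : Matrix (Fin n) (Fin n) ℝ := A + B * Fm with hK
  have realK : ∀ r ∈ auxV A B C D n, K *ᵥ r ∈ auxV A B C D n := by
    intro r hr
    rw [hK, Matrix.add_mulVec, ← Matrix.mulVec_mulVec]
    exact (hFm r hr).2
  have realC : ∀ r ∈ auxV A B C D n, (C + D * Fm) *ᵥ r ∈ (⊥ : Submodule ℝ (Fin p → ℝ)) := by
    intro r hr
    rw [Matrix.add_mulVec, ← Matrix.mulVec_mulVec, Submodule.mem_bot]
    exact (hFm r hr).1
  set W : Submodule (RatFunc ℝ) (Fin n → RatFunc ℝ) :=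
    Submodule.span (RatFunc ℝ)
      ((fun r : Fin n → ℝ => fun i => auxphiR (r i)) '' ((auxV A B C D n) : Set (Fin n → ℝ)))
    with hW
  have hKW : ∀ w ∈ W, (K.map auxphiR) *ᵥ w ∈ W :=
    aux_span_induct K (auxV A B C D n) (auxV A B C D n) realK
  have hCW : ∀ w ∈ W, ((C + D * Fm).map auxphiR) *ᵥ w = 0 := by
    intro w hw
    have h1 := aux_span_induct (C + D * Fm) (auxV A B C D n) ⊥ realC w hw
    rw [aux_span_bot, Submodule.mem_bot] at h1
    exact h1
  -- the matrix X•1 - K over RatFunc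
  set M' : Matrix (Fin n) (Fin n) (RatFunc ℝ) :=
    (algebraMap (Polynomial ℝ) (RatFunc ℝ) X) • 1 - K.map auxphiR with hM'
  have hM'w : ∀ w ∈ W, M' *ᵥ w ∈ W := by
    intro w hw
    rw [hM', Matrix.sub_mulVec]
    refine Submodule.sub_mem W ?_ (hKW w hw)
    rw [Matrix.smul_mulVec, Matrix.one_mulVec]
    exact Submodule.smul_mem W _ hw
  have hM'inj : ∀ v : Fin n → RatFunc ℝ, M' *ᵥ v = 0 → v = 0 := by
    intro v hv
    apply aux_polyMat_injF _ (aux_detXK K)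
    rw [aux_XK_map]
    rw [hM'] at hv
    exact hv
  set e : W →ₗ[RatFunc ℝ] W := (Matrix.mulVecLin M').restrict
    (fun w hw => hM'w w hw) with he
  have heinj : Function.Injective e := by
    intro a b hab
    have h1 : M' *ᵥ (a : Fin n → RatFunc ℝ) = M' *ᵥ (b : Fin n → RatFunc ℝ) := by
      have := congrArg Subtype.val hab
      exact this
    have h2 : M' *ᵥ ((a : Fin n → RatFunc ℝ) - (b : Fin n → RatFunc ℝ)) = 0 := by
      have h4 := map_sub M'.mulVecLin (a : Fin n → RatFunc ℝ) (b : Fin n → RatFunc ℝ)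
      simp only [Matrix.mulVecLin_apply] at h4
      rw [h4, h1, sub_self]
    have h3 := hM'inj _ h2
    exact Subtype.ext (sub_eq_zero.mp h3)
  have hesurj : Function.Surjective e := LinearMap.surjective_of_injective heinj
  have hb' : (fun i => auxphiR ((B *ᵥ du 0) i)) ∈ W :=
    Submodule.subset_span ⟨B *ᵥ du 0, hBmem, rfl⟩
  obtain ⟨xw, hxw⟩ := hesurj ⟨_, hb'⟩
  have hxweq : M' *ᵥ (xw : Fin n → RatFunc ℝ) = (fun i => auxphiR ((B *ᵥ du 0) i)) := by
    have := congrArg Subtype.val hxw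
    exact this
  -- the kernel vector
  set xv : Fin n → RatFunc ℝ := (xw : Fin n → RatFunc ℝ) with hxv
  set uv : Fin m → RatFunc ℝ := (fun c => auxphiR (du 0 c)) + (Fm.map auxphiR) *ᵥ xv with huv
  have hmapadd : (K.map auxphiR : Matrix (Fin n) (Fin n) (RatFunc ℝ))
      = A.map auxphiR + (B * Fm).map auxphiR := by
    rw [hK]
    ext i j
    rw [Matrix.map_apply, Matrix.add_apply, map_add, Matrix.add_apply,
      Matrix.map_apply, Matrix.map_apply]
  have hrow1 : (A.map auxphiR - (algebraMap (Polynomial ℝ) (RatFunc ℝ) X) • 1) *ᵥ xv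
      + (B.map auxphiR) *ᵥ uv = 0 := by
    have e1 : (B.map auxphiR) *ᵥ uv
        = (fun i => auxphiR ((B *ᵥ du 0) i)) + ((B * Fm).map auxphiR) *ᵥ xv := by
      rw [huv, Matrix.mulVec_add]
      congr 1
      · exact aux_map_mulVec auxphiR B (du 0)
      · have hBF : ((B * Fm).map ⇑auxphiR : Matrix (Fin n) (Fin n) (RatFunc ℝ))
            = B.map ⇑auxphiR * Fm.map ⇑auxphiR := by
          ext i j
          rw [Matrix.map_apply, Matrix.mul_apply, Matrix.mul_apply, map_sum]
          apply Finset.sum_congr rfl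
          intro k _
          rw [_root_.map_mul, Matrix.map_apply, Matrix.map_apply]
        rw [Matrix.mulVec_mulVec, hBF]
    have hxweq' : (algebraMap (Polynomial ℝ) (RatFunc ℝ) X) • xv - (K.map auxphiR) *ᵥ xv
        = (fun i => auxphiR ((B *ᵥ du 0) i)) := by
      rw [← hxweq, hM', Matrix.sub_mulVec, Matrix.smul_mulVec, Matrix.one_mulVec]
    rw [e1, Matrix.sub_mulVec, Matrix.smul_mulVec, Matrix.one_mulVec, ← hxweq',
      hmapadd, Matrix.add_mulVec]
    abel
  have hrow2 : (C.map auxphiR) *ᵥ xv + (D.map auxphiR) *ᵥ uv = 0 := by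
    have e1 : (D.map auxphiR) *ᵥ uv
        = (fun i => auxphiR ((D *ᵥ du 0) i)) + ((D * Fm).map auxphiR) *ᵥ xv := by
      rw [huv, Matrix.mulVec_add]
      congr 1
      · exact aux_map_mulVec auxphiR D (du 0)
      · have hDF : ((D * Fm).map ⇑auxphiR : Matrix (Fin p) (Fin n) (RatFunc ℝ))
            = D.map ⇑auxphiR * Fm.map ⇑auxphiR := by
          ext i j
          rw [Matrix.map_apply, Matrix.mul_apply, Matrix.mul_apply, map_sum]
          apply Finset.sum_congr rfl
          intro k _
          rw [_root_.map_mul, Matrix.map_apply, Matrix.map_apply]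
        rw [Matrix.mulVec_mulVec, hDF]
    have e2 : (fun i => auxphiR ((D *ᵥ du 0) i)) = (0 : Fin p → RatFunc ℝ) := by
      rw [hD0]
      funext i
      simp
    have e3 : (C.map auxphiR) *ᵥ xv + ((D * Fm).map auxphiR) *ᵥ xv = 0 := by
      have h1 := hCW xv xw.2
      have h2 : ((C + D * Fm).map auxphiR : Matrix (Fin p) (Fin n) (RatFunc ℝ))
          = C.map auxphiR + (D * Fm).map auxphiR := by
        ext i j
        rw [Matrix.map_apply, Matrix.add_apply, map_add, Matrix.add_apply,
          Matrix.map_apply, Matrix.map_apply]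
      rw [h2, Matrix.add_mulVec] at h1
      exact h1
    rw [e1, e2, zero_add]
    exact e3
  have hker : auxMF A B C D *ᵥ (Sum.elim xv uv) = 0 := by
    rw [aux_MF_blocks, Matrix.fromBlocks_mulVec]
    have hcl : (Sum.elim xv uv) ∘ Sum.inl = xv := Sum.elim_comp_inl _ _
    have hcr : (Sum.elim xv uv) ∘ Sum.inr = uv := Sum.elim_comp_inr _ _
    rw [hcl, hcr, hrow1, hrow2]
    funext i
    cases i <;> rfl
  have hv0 := h _ hker
  have hxv0 : xv = 0 := funext fun i => congrFun hv0 (Sum.inl i)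
  have huv0 : uv = 0 := funext fun c => congrFun hv0 (Sum.inr c)
  apply hdu0ne
  funext c
  apply aux_phiR_inj
  show auxphiR (du 0 c) = auxphiR 0
  rw [map_zero]
  have h1 : auxphiR (du 0 c) = uv c - ((Fm.map auxphiR) *ᵥ xv) c := by
    rw [huv]
    simp
  rw [h1, huv0, hxv0, Matrix.mulVec_zero]
  simp

end LTI6

/-- Existence of an `L`-delay left inverse: (i) there exists `z ∈ ℂ` where the Rosenbrock
matrix has rank `n + m` iff (ii) there exist `L ≤ n` and `P` with `P ⬝ I_L = [I_m, 0]`. -/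
theorem rosenbrock_full_rank_iff_exists_left_inverse {n m p : ℕ}
    (A : Matrix (Fin n) (Fin n) ℝ) (B : Matrix (Fin n) (Fin m) ℝ)
    (C : Matrix (Fin p) (Fin n) ℝ) (D : Matrix (Fin p) (Fin m) ℝ) :
    (∃ z : ℂ, (rosenbrock A B C D z).rank = n + m) ↔
    (∃ L : ℕ, L ≤ n ∧ ∃ P : Matrix (Fin m) (Fin (L + 1) × Fin p) ℝ,
      P * invMat A B C D L = idZero m L) := by
  constructor
  · rintro ⟨z, hz⟩
    exact aux_fullF_to_leftinv A B C D (aux_rank_to_fullF A B C D z hz)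
  · rintro ⟨L, hL, P, hP⟩
    exact aux_fullF_to_rank A B C D (aux_leftinv_to_fullF A B C D L P hP)
end

section
/- Suppose rank([O_L, I_L]) = n + rank(I_L) (horizontal concatenation) and there exists P_0 ∈ ℝ^{m×(L+1)p} with P_0 · I_L = [I_m, 0]. Then there exists P ∈ ℝ^{m×(L+1)p} satisfying both P · I_L = [I_m, 0] and P · O_L = 0. -/
open Matrix

/-- Block observability matrix `O_L` with block rows `C A^k`, `k = 0,…,L`. -/
noncomputable def obsMat {n p : ℕ} (A : Matrix (Fin n) (Fin n) ℝ)
    (C : Matrix (Fin p) (Fin n) ℝ) (L : ℕ) :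
    Matrix (Fin (L + 1) × Fin p) (Fin n) ℝ :=
  fun kr j => (C * A ^ (kr.1 : ℕ)) kr.2 j

/-- The range of the linear map of a horizontal concatenation is the sup of the ranges. -/
lemma range_fromColumns_mulVecLin {K : Type*} [Field K] {q n₁ n₂ : Type*}
    [Fintype q] [Fintype n₁] [Fintype n₂]
    (A : Matrix q n₁ K) (B : Matrix q n₂ K) :
    LinearMap.range (fromCols A B).mulVecLin =
      LinearMap.range A.mulVecLin ⊔ LinearMap.range B.mulVecLin := by
  apply le_antisymm
  · rintro _ ⟨v, rfl⟩
    have hv : (fromCols A B).mulVecLin v = A *ᵥ (v ∘ Sum.inl) + B *ᵥ (v ∘ Sum.inr) := by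
      have h2 := fromCols_mulVec_sumElim A B (v ∘ Sum.inl) (v ∘ Sum.inr)
      rw [Matrix.mulVecLin_apply]
      rw [show v = Sum.elim (v ∘ Sum.inl) (v ∘ Sum.inr) from (Sum.elim_comp_inl_inr v).symm]
      exact h2
    rw [hv]
    exact Submodule.add_mem_sup ⟨v ∘ Sum.inl, rfl⟩ ⟨v ∘ Sum.inr, rfl⟩
  · apply sup_le
    · rintro _ ⟨x, rfl⟩
      exact ⟨Sum.elim x 0, by simp [fromCols_mulVec_sumElim]⟩
    · rintro _ ⟨y, rfl⟩
      exact ⟨Sum.elim 0 y, by simp [fromCols_mulVec_sumElim]⟩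

/-- Factorization of a linear map through another with a larger kernel. -/
lemma exists_comp_eq_of_ker_le_ker {K V W U : Type*} [Field K] [AddCommGroup V] [Module K V]
    [AddCommGroup W] [Module K W] [AddCommGroup U] [Module K U]
    (f : V →ₗ[K] W) (g : V →ₗ[K] U) (hk : LinearMap.ker f ≤ LinearMap.ker g) :
    ∃ M : W →ₗ[K] U, M.comp f = g := by
  obtain ⟨M, hM⟩ := LinearMap.exists_extend
    (((LinearMap.ker f).liftQ g hk).comp (f.quotKerEquivRange).symm.toLinearMap)
  refine ⟨M, ?_⟩
  ext v
  have h1 : f.quotKerEquivRange (Submodule.Quotient.mk v)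
      = ⟨f v, LinearMap.mem_range_self f v⟩ := by
    ext
    exact f.quotKerEquivRange_apply_mk v
  have h2 := LinearMap.congr_fun hM ⟨f v, LinearMap.mem_range_self f v⟩
  simp only [LinearMap.comp_apply, Submodule.subtype_apply, LinearEquiv.coe_toLinearMap] at h2 ⊢
  rw [h2, ← h1, LinearEquiv.symm_apply_apply, Submodule.liftQ_apply]

/-- If `rank [O_L, I_L] = n + rank I_L` and some `P₀` satisfies `P₀ I_L = [I_m, 0]`,
then there is a `P` with `P I_L = [I_m, 0]` and `P O_L = 0`. -/
theorem exists_left_inverse_annihilating_obs {n m p L : ℕ}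
    (A : Matrix (Fin n) (Fin n) ℝ) (B : Matrix (Fin n) (Fin m) ℝ)
    (C : Matrix (Fin p) (Fin n) ℝ) (D : Matrix (Fin p) (Fin m) ℝ)
    (hrank : (Matrix.fromCols (obsMat A C L) (invMat A B C D L)).rank =
      n + (invMat A B C D L).rank)
    (P₀ : Matrix (Fin m) (Fin (L + 1) × Fin p) ℝ)
    (hP₀ : P₀ * invMat A B C D L = idZero m L) :
    ∃ P : Matrix (Fin m) (Fin (L + 1) × Fin p) ℝ,
      P * invMat A B C D L = idZero m L ∧ P * obsMat A C L = 0 := by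
  set O := obsMat A C L with hO
  set Iv := invMat A B C D L with hIv
  set V := LinearMap.range O.mulVecLin with hV
  set W := LinearMap.range Iv.mulVecLin with hW
  -- rewrite the rank hypothesis
  rw [Matrix.rank, Matrix.rank, range_fromColumns_mulVecLin] at hrank
  rw [← hV, ← hW] at hrank
  have hdim := Submodule.finrank_sup_add_finrank_inf_eq V W
  have hVle : Module.finrank ℝ V ≤ n := by
    have := O.rank_le_card_width
    rwa [Matrix.rank, Fintype.card_fin] at this
  have hVn : Module.finrank ℝ V = n := by omega
  have hinf0 : Module.finrank ℝ ↥(V ⊓ W) = 0 := by omega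
  have hinf : V ⊓ W = ⊥ := Submodule.finrank_eq_zero.mp hinf0
  have hker : LinearMap.ker O.mulVecLin = ⊥ := by
    have hrn := LinearMap.finrank_range_add_finrank_ker O.mulVecLin
    rw [← hV, hVn, Module.finrank_pi, Fintype.card_fin] at hrn
    exact Submodule.finrank_eq_zero.mp (by omega)
  -- the combined maps
  set F := (fromCols O Iv).mulVecLin with hF
  set G := (fromCols (1 : Matrix (Fin n) (Fin n) ℝ)
      (0 : Matrix (Fin n) (Fin (L + 1) × Fin m) ℝ)).mulVecLin with hG
  have hkerle : LinearMap.ker F ≤ LinearMap.ker G := by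
    intro v hv
    rw [LinearMap.mem_ker, hF, Matrix.mulVecLin_apply,
      show v = Sum.elim (v ∘ Sum.inl) (v ∘ Sum.inr) from (Sum.elim_comp_inl_inr v).symm,
      fromCols_mulVec_sumElim] at hv
    have hOx : O *ᵥ (v ∘ Sum.inl) = 0 := by
      have hmem : O *ᵥ (v ∘ Sum.inl) ∈ V ⊓ W := by
        refine ⟨⟨v ∘ Sum.inl, rfl⟩, ⟨-(v ∘ Sum.inr), ?_⟩⟩
        rw [Matrix.mulVecLin_apply, Matrix.mulVec_neg]
        linear_combination (norm := module) -hv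
      rw [hinf] at hmem
      exact hmem
    have hx : v ∘ Sum.inl = 0 := by
      have : (v ∘ Sum.inl) ∈ LinearMap.ker O.mulVecLin := hOx
      rwa [hker, Submodule.mem_bot] at this
    rw [LinearMap.mem_ker, hG, Matrix.mulVecLin_apply,
      show v = Sum.elim (v ∘ Sum.inl) (v ∘ Sum.inr) from (Sum.elim_comp_inl_inr v).symm,
      fromCols_mulVec_sumElim, hx]
    simp
  obtain ⟨h, hh⟩ := exists_comp_eq_of_ker_le_ker F G hkerle
  set M := LinearMap.toMatrix' h with hM
  have hMS : M * fromCols O Iv = fromCols (1 : Matrix (Fin n) (Fin n) ℝ)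
      (0 : Matrix (Fin n) (Fin (L + 1) × Fin m) ℝ) := by
    apply Matrix.toLin'.injective
    rw [Matrix.toLin'_mul, hM, Matrix.toLin'_toMatrix', Matrix.toLin'_apply',
      Matrix.toLin'_apply', ← hF, ← hG, hh]
  rw [Matrix.mul_fromCols, fromCols_ext_iff] at hMS
  obtain ⟨hMO, hMI⟩ := hMS
  refine ⟨P₀ - P₀ * O * M, ?_, ?_⟩
  · rw [Matrix.sub_mul, Matrix.mul_assoc (P₀ * O), hMI, Matrix.mul_zero, sub_zero, hP₀]
  · rw [Matrix.sub_mul, Matrix.mul_assoc (P₀ * O), hMO, Matrix.mul_one, sub_self]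
end

section
/- Let Ã ∈ ℝ^{n×n}, C̃ ∈ ℝ^{m×n}, N ≥ 1, and let Õ_{N−1} ∈ ℝ^{Nm×n} be the matrix with block rows C̃ Ã^k for k = 0,…,N−1. Let X̃ ∈ ℝ^{n×s} and let G ∈ ℝ^{s×Nm} satisfy (Õ_{N−1} X̃) G (Õ_{N−1} X̃) = Õ_{N−1} X̃. Assume that for every z ∈ im(X̃), Õ_{N−1} z = 0 implies z = 0. Define M_u := C̃ Ã^N X̃ G ∈ ℝ^{m×Nm} and let R ∈ ℝ^{Nm×Nm} be the block companion matrix whose (i, i+1) blocks equal I_m for i = 1,…,N−1, whose last block row equals M_u, and whose remaining blocks are zero. Then for every v ∈ im(X̃), R (Õ_{N−1} v) = Õ_{N−1} (Ã v). -/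
open Matrix

/-- Block observability-type matrix with block rows `C̃ Ã^k`, `k = 0,…,N-1`. -/
noncomputable def tildeObs {n m : ℕ} (Atil : Matrix (Fin n) (Fin n) ℝ)
    (Ctil : Matrix (Fin m) (Fin n) ℝ) (N : ℕ) :
    Matrix (Fin N × Fin m) (Fin n) ℝ :=
  fun kr j => (Ctil * Atil ^ (kr.1 : ℕ)) kr.2 j

/-- Block companion matrix: identity blocks on the superdiagonal, last block row `M_u`. -/
noncomputable def blockCompanion {N m : ℕ} (Mu : Matrix (Fin m) (Fin N × Fin m) ℝ) :
    Matrix (Fin N × Fin m) (Fin N × Fin m) ℝ :=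
  fun ir jc =>
    if (ir.1 : ℕ) + 1 = N then Mu ir.2 jc
    else if (jc.1 : ℕ) = (ir.1 : ℕ) + 1 ∧ ir.2 = jc.2 then 1 else 0

/-- With `M_u := C̃ Ã^N X̃ G` and `G` a (1st Moore–Penrose equation) pseudoinverse of
`Õ_{N-1} X̃`, if `Õ_{N-1}` is injective on the column space of `X̃`, then
`R (Õ_{N-1} v) = Õ_{N-1} (Ã v)` for every `v` in the column space of `X̃`. -/
theorem blockCompanion_shifts_tildeObs {n m s N : ℕ} (hN : 1 ≤ N)
    (Atil : Matrix (Fin n) (Fin n) ℝ) (Ctil : Matrix (Fin m) (Fin n) ℝ)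
    (Xtil : Matrix (Fin n) (Fin s) ℝ) (G : Matrix (Fin s) (Fin N × Fin m) ℝ)
    (hG : (tildeObs Atil Ctil N * Xtil) * G * (tildeObs Atil Ctil N * Xtil) =
      tildeObs Atil Ctil N * Xtil)
    (hinj : ∀ z ∈ LinearMap.range Xtil.mulVecLin,
      (tildeObs Atil Ctil N).mulVec z = 0 → z = 0) :
    ∀ v ∈ LinearMap.range Xtil.mulVecLin,
      (blockCompanion (Ctil * Atil ^ N * Xtil * G)).mulVec
        ((tildeObs Atil Ctil N).mulVec v) =
      (tildeObs Atil Ctil N).mulVec (Atil.mulVec v) := by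
  rintro v ⟨c, rfl⟩
  set O := tildeObs Atil Ctil N with hOdef
  -- key: X G (O X) c = X c
  set w := G.mulVec ((O * Xtil).mulVec c) with hw
  have hXw : Xtil.mulVec w = Xtil.mulVec c := by
    have hz : O.mulVec (Xtil.mulVec (w - c)) = 0 := by
      rw [Matrix.mulVec_sub, Matrix.mulVec_sub, Matrix.mulVec_mulVec, hw,
        Matrix.mulVec_mulVec, Matrix.mulVec_mulVec, Matrix.mulVec_mulVec, hG, sub_self]
    have h0 := hinj _ ⟨w - c, rfl⟩ hz
    have h2 : Xtil.mulVec w - Xtil.mulVec c = 0 := by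
      rw [← Matrix.mulVec_sub]; exact h0
    exact sub_eq_zero.mp h2
  have hv : Xtil.mulVecLin c = Xtil.mulVec c := rfl
  rw [hv]
  funext ir
  obtain ⟨i, r⟩ := ir
  by_cases h : (i : ℕ) + 1 = N
  · -- last block row
    have lhs : (blockCompanion (Ctil * Atil ^ N * Xtil * G)).mulVec
        (O.mulVec (Xtil.mulVec c)) (i, r)
        = ((Ctil * Atil ^ N * Xtil * G).mulVec (O.mulVec (Xtil.mulVec c))) r := by
      simp only [Matrix.mulVec, dotProduct, blockCompanion, h, if_true]
    rw [lhs]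
    have : (Ctil * Atil ^ N * Xtil * G).mulVec (O.mulVec (Xtil.mulVec c))
        = (Ctil * Atil ^ N).mulVec (Xtil.mulVec w) := by
      simp only [hw, Matrix.mulVec_mulVec, Matrix.mul_assoc]
    rw [this, hXw, Matrix.mulVec_mulVec]
    show (Ctil * Atil ^ N * Xtil).mulVec c r = O.mulVec (Atil.mulVec (Xtil.mulVec c)) (i, r)
    have hrhs : O.mulVec (Atil.mulVec (Xtil.mulVec c)) (i, r)
        = (Ctil * Atil ^ (i : ℕ)).mulVec (Atil.mulVec (Xtil.mulVec c)) r := rfl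
    have hm : Ctil * Atil ^ (i : ℕ) * Atil * Xtil = Ctil * Atil ^ N * Xtil := by
      rw [Matrix.mul_assoc Ctil, ← pow_succ, h]
    rw [hrhs, Matrix.mulVec_mulVec, Matrix.mulVec_mulVec, hm]
  · -- superdiagonal block row
    have hi1 : (i : ℕ) + 1 < N := lt_of_le_of_ne i.2 h
    set j' : Fin N := ⟨(i : ℕ) + 1, hi1⟩ with hj'
    have lhs : (blockCompanion (Ctil * Atil ^ N * Xtil * G)).mulVec
        (O.mulVec (Xtil.mulVec c)) (i, r)
        = O.mulVec (Xtil.mulVec c) (j', r) := by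
      simp only [Matrix.mulVec, dotProduct, blockCompanion, h, if_false]
      rw [Fintype.sum_prod_type]
      rw [Finset.sum_eq_single j']
      · rw [Finset.sum_eq_single r]
        · simp [hj']
        · intro b _ hb
          simp [hb.symm]
        · simp
      · intro b _ hb
        have : ¬ ((b : ℕ) = (i : ℕ) + 1) := by
          intro hc; exact hb (Fin.ext (by simp [hj', hc]))
        simp [this]
      · simp
    rw [lhs]
    show O.mulVec (Xtil.mulVec c) (j', r) = O.mulVec (Atil.mulVec (Xtil.mulVec c)) (i, r)
    have h1 : O.mulVec (Xtil.mulVec c) (j', r)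
        = (Ctil * Atil ^ ((i : ℕ) + 1)).mulVec (Xtil.mulVec c) r := rfl
    have h2 : O.mulVec (Atil.mulVec (Xtil.mulVec c)) (i, r)
        = (Ctil * Atil ^ (i : ℕ)).mulVec (Atil.mulVec (Xtil.mulVec c)) r := rfl
    have hm : Ctil * Atil ^ ((i : ℕ) + 1) = Ctil * Atil ^ (i : ℕ) * Atil := by
      rw [Matrix.mul_assoc Ctil, ← pow_succ]
    rw [h1, h2, hm]
    simp only [Matrix.mulVec_mulVec, Matrix.mul_assoc]
end

section
/- Let O ∈ ℝ^{q_y×n}, T ∈ ℝ^{q_y×q_u}, X ∈ ℝ^{n×s}, U ∈ ℝ^{q_u×s} be real matrices, and define Y := O X + T U ∈ ℝ^{q_y×s}. Assume the vertically stacked matrix [X; U] ∈ ℝ^{(n+q_u)×s} has full row rank n + q_u. Then {X w : w ∈ ℝ^s, Y w = 0} = {ξ ∈ ℝⁿ : there exists ū ∈ ℝ^{q_u} with O ξ + T ū = 0}. In particular, the column space of X (I − G Y), where G is any matrix with Y G Y = Y, equals the set on the right-hand side. -/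
open Matrix

/-- If `Y = O X + T U` and the stacked matrix `[X; U]` has full row rank `n + q_u`, then
`{X w : Y w = 0}` equals the finite-horizon output-nulling set
`{ξ : ∃ ū, O ξ + T ū = 0}`; in particular, for any `G` with `Y G Y = Y`, the column
space of `X (I - G Y)` equals that set. -/
theorem image_ker_eq_output_nulling {qy qu n s : ℕ}
    (O : Matrix (Fin qy) (Fin n) ℝ) (T : Matrix (Fin qy) (Fin qu) ℝ)
    (X : Matrix (Fin n) (Fin s) ℝ) (U : Matrix (Fin qu) (Fin s) ℝ)
    (hrank : (Matrix.fromRows X U).rank = n + qu) :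
    ({ξ : Fin n → ℝ | ∃ w : Fin s → ℝ, (O * X + T * U).mulVec w = 0 ∧ ξ = X.mulVec w} =
      {ξ : Fin n → ℝ | ∃ ubar : Fin qu → ℝ, O.mulVec ξ + T.mulVec ubar = 0}) ∧
    (∀ G : Matrix (Fin s) (Fin qy) ℝ,
      (O * X + T * U) * G * (O * X + T * U) = O * X + T * U →
      {ξ : Fin n → ℝ | ∃ w : Fin s → ℝ, ξ = (X * (1 - G * (O * X + T * U))).mulVec w} =
        {ξ : Fin n → ℝ | ∃ ubar : Fin qu → ℝ, O.mulVec ξ + T.mulVec ubar = 0}) := by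
  -- surjectivity of w ↦ (X w, U w)
  have hsurj : ∀ (ξ : Fin n → ℝ) (u : Fin qu → ℝ),
      ∃ w : Fin s → ℝ, X.mulVec w = ξ ∧ U.mulVec w = u := by
    have htop : LinearMap.range (Matrix.fromRows X U).mulVecLin = ⊤ := by
      apply Submodule.eq_top_of_finrank_eq
      rw [show Module.finrank ℝ ((Fin n ⊕ Fin qu) → ℝ) = n + qu by simp]
      exact hrank
    intro ξ u
    have := htop ▸ Submodule.mem_top (x := Sum.elim ξ u) (R := ℝ)
    obtain ⟨w, hw⟩ := this
    rw [Matrix.mulVecLin_apply, Matrix.fromRows_mulVec] at hw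
    exact ⟨w, funext fun i => congrFun hw (Sum.inl i),
      funext fun i => congrFun hw (Sum.inr i)⟩
  have hsurj' : ∀ (ξ : Fin n → ℝ) (u : Fin qu → ℝ),
      ∃ w : Fin s → ℝ, X.mulVec w = ξ ∧ U.mulVec w = u := hsurj
  have h1 : {ξ : Fin n → ℝ | ∃ w : Fin s → ℝ, (O * X + T * U).mulVec w = 0 ∧ ξ = X.mulVec w} =
      {ξ : Fin n → ℝ | ∃ ubar : Fin qu → ℝ, O.mulVec ξ + T.mulVec ubar = 0} := by
    ext ξ
    constructor
    · rintro ⟨w, hw, rfl⟩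
      exact ⟨U.mulVec w, by
        simpa [Matrix.add_mulVec, Matrix.mulVec_mulVec] using hw⟩
    · rintro ⟨u, hu⟩
      obtain ⟨w, hX, hU⟩ := hsurj ξ u
      refine ⟨w, ?_, hX.symm⟩
      rw [Matrix.add_mulVec, ← Matrix.mulVec_mulVec, ← Matrix.mulVec_mulVec, hX, hU]
      exact hu
  refine ⟨h1, ?_⟩
  intro G hG
  rw [← h1]
  ext ξ
  constructor
  · rintro ⟨w, rfl⟩
    refine ⟨(1 - G * (O * X + T * U)).mulVec w, ?_, ?_⟩
    · have : (O * X + T * U) * (1 - G * (O * X + T * U)) = 0 := by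
        rw [Matrix.mul_sub, Matrix.mul_one, ← Matrix.mul_assoc, hG, sub_self]
      rw [Matrix.mulVec_mulVec, this, Matrix.zero_mulVec]
    · rw [Matrix.mulVec_mulVec]
  · rintro ⟨w, hw, rfl⟩
    refine ⟨w, ?_⟩
    rw [← Matrix.mulVec_mulVec, Matrix.sub_mulVec, Matrix.one_mulVec,
      ← Matrix.mulVec_mulVec, hw, Matrix.mulVec_zero, sub_zero]
end

section
/- Let S ∈ ℂ^{d×d} with operator 2-norm ‖S‖₂ ≤ 1, and let Q ∈ ℂ^{d×t} have orthonormal columns (Qᴴ Q = I_t). If λ ∈ ℂ with |λ| = 1 is an eigenvalue of Qᴴ S Q, then λ is an eigenvalue of S; indeed, for any eigenvector v of Qᴴ S Q with eigenvalue λ, S (Q v) = λ (Q v). -/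
open Matrix
open scoped Matrix.Norms.L2Operator ComplexConjugate

lemma dot_self_eq_norm_sq {n : ℕ} (x : Fin n → ℂ) :
    star x ⬝ᵥ x = ((‖(WithLp.equiv 2 (Fin n → ℂ)).symm x‖ : ℝ) : ℂ) ^ 2 := by
  rw [dotProduct_comm, ← EuclideanSpace.inner_toLp_toLp]
  exact inner_self_eq_norm_sq_to_K _

/-- If `‖S‖₂ ≤ 1` (operator 2-norm), `Q` has orthonormal columns, and `λ` with `|λ| = 1`
is an eigenvalue of `Qᴴ S Q`, then `λ` is an eigenvalue of `S`; indeed every eigenvector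
`v` of `Qᴴ S Q` for `λ` satisfies `S (Q v) = λ (Q v)`. -/
theorem unimodular_eigenvalue_of_compression {d t : ℕ}
    (S : Matrix (Fin d) (Fin d) ℂ) (hS : ‖S‖ ≤ 1)
    (Q : Matrix (Fin d) (Fin t) ℂ) (hQ : Qᴴ * Q = 1)
    (lam : ℂ) (hlam : ‖lam‖ = 1) :
    (∀ v : Fin t → ℂ, v ≠ 0 → (Qᴴ * S * Q).mulVec v = lam • v →
      S.mulVec (Q.mulVec v) = lam • Q.mulVec v) ∧
    ((∃ v : Fin t → ℂ, v ≠ 0 ∧ (Qᴴ * S * Q).mulVec v = lam • v) →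
      ∃ w : Fin d → ℂ, w ≠ 0 ∧ S.mulVec w = lam • w) := by
  have hmod : lam * conj lam = 1 := by
    rw [Complex.mul_conj]
    norm_cast
    rw [Complex.normSq_eq_norm_sq, hlam]; norm_num
  have main : ∀ v : Fin t → ℂ, (Qᴴ * S * Q).mulVec v = lam • v →
      S.mulVec (Q.mulVec v) = lam • Q.mulVec v := by
    intro v hv
    set w := Q.mulVec v with hw
    set u := S.mulVec w with hu
    have hQu : Qᴴ.mulVec u = lam • v := by
      rw [hu, hw, Matrix.mulVec_mulVec, Matrix.mulVec_mulVec]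
      exact hv
    set n : ℂ := star v ⬝ᵥ v with hn
    have hnstar : star n = n := by
      rw [hn, ← Matrix.star_dotProduct_star, star_star, dotProduct_comm]
    have h1 : star w ⬝ᵥ w = n := by
      rw [hw, Matrix.star_mulVec, Matrix.dotProduct_mulVec, Matrix.vecMul_vecMul, hQ,
        Matrix.vecMul_one]
    have h2 : star w ⬝ᵥ u = lam * n := by
      rw [hw, Matrix.star_mulVec, ← Matrix.dotProduct_mulVec, hQu, dotProduct_smul,
        smul_eq_mul]
    have h3 : star u ⬝ᵥ w = conj lam * n := by
      have : star (star w ⬝ᵥ u) = star u ⬝ᵥ w := by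
        rw [Matrix.star_dotProduct, star_star, dotProduct_comm]
      rw [← this, h2, star_mul', hnstar]
      rfl
    set dd : Fin d → ℂ := u - lam • w with hdd
    have hdot : star dd ⬝ᵥ dd = star u ⬝ᵥ u - n := by
      rw [hdd]
      simp only [star_sub, star_smul, sub_dotProduct, dotProduct_sub,
        smul_dotProduct, dotProduct_smul, smul_eq_mul, h1, h2, h3]
      have hsl : (star lam : ℂ) = conj lam := rfl
      rw [hsl]
      ring_nf
      rw [mul_comm (conj lam) lam, hmod, one_mul]
    -- norms
    set e := (WithLp.equiv 2 (Fin d → ℂ)).symm with he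
    set et := (WithLp.equiv 2 (Fin t → ℂ)).symm with het
    have keyu := dot_self_eq_norm_sq u
    have keyw := dot_self_eq_norm_sq w
    have keyv := dot_self_eq_norm_sq v
    have keyd := dot_self_eq_norm_sq dd
    have hwv : ‖e w‖ = ‖et v‖ := by
      have hc : ((‖e w‖ : ℝ) : ℂ) ^ 2 = ((‖et v‖ : ℝ) : ℂ) ^ 2 := by
        rw [← keyw, ← keyv, h1, hn]
      have hr : (‖e w‖ : ℝ) ^ 2 = (‖et v‖ : ℝ) ^ 2 := by exact_mod_cast hc
      nlinarith [norm_nonneg (e w), norm_nonneg (et v)]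
    have hb0 : ‖e u‖ ≤ ‖S‖ * ‖e w‖ := S.l2_opNorm_mulVec (e w)
    have hb : ‖e u‖ ≤ ‖et v‖ := by
      calc ‖e u‖ ≤ ‖S‖ * ‖e w‖ := hb0
        _ ≤ 1 * ‖e w‖ := by
            exact mul_le_mul_of_nonneg_right hS (norm_nonneg _)
        _ = ‖et v‖ := by rw [one_mul, hwv]
    have hcc : ((‖e dd‖ : ℝ) : ℂ) ^ 2 =
        ((‖e u‖ : ℝ) : ℂ) ^ 2 - ((‖et v‖ : ℝ) : ℂ) ^ 2 := by
      rw [← keyd, ← keyu, hdot, hn, keyv]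
    have hrr : (‖e dd‖ : ℝ) ^ 2 = ‖e u‖ ^ 2 - ‖et v‖ ^ 2 := by exact_mod_cast hcc
    have h0 : ‖e dd‖ = 0 := by
      nlinarith [norm_nonneg (e dd), norm_nonneg (e u), norm_nonneg (et v)]
    have h0' : e dd = 0 := norm_eq_zero.mp h0
    have hdd0 : dd = 0 := by
      have := congrArg (WithLp.equiv 2 (Fin d → ℂ)) h0'
      simpa [he] using this
    rw [hdd, sub_eq_zero] at hdd0
    exact hdd0
  refine ⟨fun v _ hv => main v hv, ?_⟩
  rintro ⟨v, hv0, hv⟩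
  refine ⟨Q.mulVec v, ?_, main v hv⟩
  intro h
  apply hv0
  have : (Qᴴ * Q).mulVec v = 0 := by
    rw [← Matrix.mulVec_mulVec, h, Matrix.mulVec_zero]
  rwa [hQ, Matrix.one_mulVec] at this
end

section
/- Let N ≥ 1, m ≥ 1, and let S̃ ∈ ℝ^{Nm×Nm} be the block upward-shift matrix with I_m in blocks (i, i+1) for i = 1,…,N−1 and zeros elsewhere. Let M_u ∈ ℝ^{m×Nm} and R := S̃ + (e_N ⊗ I_m) M_u, where e_N is the N-th standard basis vector of ℝ^N. Suppose there exist J ∈ ℝ^{Nm×r} with full column rank and A_z ∈ ℝ^{r×r} such that R J = J A_z, and suppose M_u (I − J G_J) = 0 for a Moore–Penrose pseudoinverse G_J of J. Then the complex spectrum of A_z is contained in the complex spectrum of R, and the spectral radius of R is strictly less than 1 if and only if the spectral radius of A_z is strictly less than 1. -/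
open Matrix

/-- Block upward-shift matrix `S̃ ∈ ℝ^{Nm×Nm}`: identity blocks `(i, i+1)`, zeros else. -/
noncomputable def blockShift (N m : ℕ) : Matrix (Fin N × Fin m) (Fin N × Fin m) ℝ :=
  fun ir jc => if (jc.1 : ℕ) = (ir.1 : ℕ) + 1 ∧ ir.2 = jc.2 then 1 else 0

/-- The Kronecker product `e_N ⊗ I_m ∈ ℝ^{Nm×m}` (`e_N` the `N`-th standard basis
vector of `ℝ^N`). -/
noncomputable def eNkronId (N m : ℕ) : Matrix (Fin N × Fin m) (Fin m) ℝ :=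
  fun ir c => if (ir.1 : ℕ) + 1 = N ∧ ir.2 = c then 1 else 0

/-- `G` is a Moore–Penrose pseudoinverse of `K`. -/
def IsMoorePenrose {a b : Type*} [Fintype a] [Fintype b] (K : Matrix a b ℝ)
    (G : Matrix b a ℝ) : Prop :=
  K * G * K = K ∧ G * K * G = G ∧ (K * G)ᵀ = K * G ∧ (G * K)ᵀ = G * K


private lemma mapMulAux {k l o : Type*} [Fintype l] (A : Matrix k l ℝ) (B : Matrix l o ℝ) :
    (A * B).map Complex.ofReal = A.map Complex.ofReal * B.map Complex.ofReal :=
  Matrix.map_mul (f := Complex.ofRealHom)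

private lemma mapOneAux {k : Type*} [DecidableEq k] :
    (1 : Matrix k k ℝ).map Complex.ofReal = 1 :=
  Matrix.map_one _ Complex.ofReal_zero Complex.ofReal_one

private lemma mapSubAux {k l : Type*} (A B : Matrix k l ℝ) :
    (A - B).map Complex.ofReal = A.map Complex.ofReal - B.map Complex.ofReal :=
  Matrix.map_sub _ (fun a b => Complex.ofReal_sub a b) A B

private lemma mapAddAux {k l : Type*} (A B : Matrix k l ℝ) :
    (A + B).map Complex.ofReal = A.map Complex.ofReal + B.map Complex.ofReal :=
  Matrix.map_add _ (fun a b => Complex.ofReal_add a b) A B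

private lemma mem_spec_iff {n : Type*} [Fintype n] [DecidableEq n] (M : Matrix n n ℂ) (μ : ℂ) :
    μ ∈ spectrum ℂ M ↔ ∃ v, v ≠ 0 ∧ M *ᵥ v = μ • v := by
  rw [spectrum.mem_iff, Matrix.isUnit_iff_isUnit_det, isUnit_iff_ne_zero, not_ne_iff,
      ← Matrix.exists_mulVec_eq_zero_iff]
  have key : ∀ v : n → ℂ, ((algebraMap ℂ (Matrix n n ℂ)) μ - M) *ᵥ v = μ • v - M *ᵥ v := by
    intro v
    rw [Matrix.sub_mulVec, Algebra.algebraMap_eq_smul_one, Matrix.smul_mulVec,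
        Matrix.one_mulVec]
  constructor
  · rintro ⟨v, hv, h⟩
    rw [key, sub_eq_zero] at h
    exact ⟨v, hv, h.symm⟩
  · rintro ⟨v, hv, h⟩
    exact ⟨v, hv, by rw [key, h, sub_self]⟩

private lemma gj_one {ι : Type*} [Fintype ι] [DecidableEq ι] {r : ℕ}
    (J : Matrix ι (Fin r) ℝ) (hJ : J.rank = r)
    (GJ : Matrix (Fin r) ι ℝ) (h1 : J * GJ * J = J) : GJ * J = 1 := by
  have hfr : Module.finrank ℝ (LinearMap.range J.mulVecLin) = r := hJ
  have hrk := LinearMap.finrank_range_add_finrank_ker J.mulVecLin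
  rw [hfr, Module.finrank_fintype_fun_eq_card, Fintype.card_fin] at hrk
  have hker0 : Module.finrank ℝ (LinearMap.ker J.mulVecLin) = 0 := by omega
  have hker : LinearMap.ker J.mulVecLin = ⊥ := Submodule.finrank_eq_zero.mp hker0
  have hinj : Function.Injective J.mulVecLin := LinearMap.ker_eq_bot.mp hker
  have h2 : J * (GJ * J) = J * (1 : Matrix (Fin r) (Fin r) ℝ) := by rw [Matrix.mul_one, ← Matrix.mul_assoc, h1]
  ext i j
  have h3 : J.mulVecLin ((GJ * J) *ᵥ Pi.single j 1) =
      J.mulVecLin ((1 : Matrix (Fin r) (Fin r) ℝ) *ᵥ Pi.single j 1) := by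
    simp only [Matrix.mulVecLin_apply, Matrix.mulVec_mulVec, h2]
  have h4 := congrFun (hinj h3) i
  simpa [Matrix.mulVec_single] using h4


private lemma shift_apply {N m : ℕ} (v : Fin N × Fin m → ℂ) (i : Fin N) (c : Fin m) :
    ((blockShift N m).map Complex.ofReal *ᵥ v) (i, c) =
      if h : (i : ℕ) + 1 < N then v (⟨(i : ℕ) + 1, h⟩, c) else 0 := by
  classical
  simp only [Matrix.mulVec, dotProduct, Matrix.map_apply, blockShift]
  by_cases h : (i : ℕ) + 1 < N
  · rw [dif_pos h, Finset.sum_eq_single (⟨⟨(i : ℕ) + 1, h⟩, c⟩ : Fin N × Fin m)]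
    · simp
    · rintro ⟨a, b⟩ - hne
      have hcond : ¬((a : ℕ) = (i : ℕ) + 1 ∧ c = b) := by
        rintro ⟨h1, h2⟩
        exact hne (by subst h2; exact Prod.ext (Fin.ext h1) rfl)
      simp [hcond]
    · intro habs; exact absurd (Finset.mem_univ _) habs
  · rw [dif_neg h]
    apply Finset.sum_eq_zero
    rintro ⟨a, b⟩ -
    have hcond : ¬((a : ℕ) = (i : ℕ) + 1 ∧ c = b) := by
      rintro ⟨h1, -⟩; exact h (h1 ▸ a.isLt)
    simp [hcond]

private lemma key_nilp {N m : ℕ} (hN : 1 ≤ N)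
    (q : Matrix (Fin N × Fin m) (Fin N × Fin m) ℂ)
    (hq2 : q * q = q) (hqh : qᴴ = q) (lam : ℂ) (hlam : 1 ≤ ‖lam‖)
    (w : Fin N × Fin m → ℂ)
    (hw : lam • w = (blockShift N m).map Complex.ofReal *ᵥ w
            - q *ᵥ ((blockShift N m).map Complex.ofReal *ᵥ w)) :
    w = 0 := by
  classical
  obtain ⟨n, rfl⟩ : ∃ n, N = n + 1 := ⟨N - 1, by omega⟩
  set Sc := (blockShift (n + 1) m).map Complex.ofReal with hSc
  have hlam0 : lam ≠ 0 := by
    intro h; rw [h, norm_zero] at hlam; linarith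
  set nsq : (Fin (n + 1) × Fin m → ℂ) → ℝ := fun v => ∑ p, Complex.normSq (v p) with hnsq
  have hnsq_nonneg : ∀ v, 0 ≤ nsq v :=
    fun v => Finset.sum_nonneg fun p _ => Complex.normSq_nonneg _
  have hnsq_zero : ∀ v, nsq v = 0 → v = 0 := by
    intro v hv
    funext p
    exact Complex.normSq_eq_zero.mp
      ((Finset.sum_eq_zero_iff_of_nonneg (fun p _ => Complex.normSq_nonneg (v p))).mp hv p
        (Finset.mem_univ p))
  have hstar : ∀ v : Fin (n + 1) × Fin m → ℂ, star v ⬝ᵥ v = (nsq v : ℂ) := by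
    intro v
    simp only [dotProduct, Pi.star_apply, hnsq, Complex.ofReal_sum]
    exact Finset.sum_congr rfl fun p _ => by rw [mul_comm]; exact Complex.mul_conj (v p)
  -- Pythagoras
  have pyth : ∀ y : Fin (n + 1) × Fin m → ℂ, nsq y = nsq (q *ᵥ y) + nsq (y - q *ᵥ y) := by
    intro y
    have hqb : q *ᵥ (y - q *ᵥ y) = 0 := by
      rw [Matrix.mulVec_sub, Matrix.mulVec_mulVec, hq2, sub_self]
    have c1 : star (y - q *ᵥ y) ⬝ᵥ (q *ᵥ y) = 0 := by
      rw [Matrix.dotProduct_mulVec]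
      have h1 : star (y - q *ᵥ y) ᵥ* q = 0 := by
        have h2 := Matrix.star_mulVec q (y - q *ᵥ y)
        rw [hqb, hqh] at h2
        rw [← h2, star_zero]
      rw [h1, zero_dotProduct]
    have c2 : star (q *ᵥ y) ⬝ᵥ (y - q *ᵥ y) = 0 := by
      rw [Matrix.star_mulVec, hqh, ← Matrix.dotProduct_mulVec, hqb, dotProduct_zero]
    have hy : y = q *ᵥ y + (y - q *ᵥ y) := by abel
    have expand : star y ⬝ᵥ y =
        star (q *ᵥ y) ⬝ᵥ (q *ᵥ y) + star (y - q *ᵥ y) ⬝ᵥ (y - q *ᵥ y) := by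
      calc star y ⬝ᵥ y
          = star (q *ᵥ y + (y - q *ᵥ y)) ⬝ᵥ (q *ᵥ y + (y - q *ᵥ y)) := by rw [← hy]
        _ = star (q *ᵥ y) ⬝ᵥ (q *ᵥ y) + star (q *ᵥ y) ⬝ᵥ (y - q *ᵥ y)
            + (star (y - q *ᵥ y) ⬝ᵥ (q *ᵥ y) + star (y - q *ᵥ y) ⬝ᵥ (y - q *ᵥ y)) := by
            rw [star_add, add_dotProduct, dotProduct_add, dotProduct_add]
        _ = _ := by rw [c1, c2]; ring
    rw [hstar, hstar, hstar] at expand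
    exact_mod_cast expand
  -- block norms
  set F : ℕ → ℝ := fun k =>
    if h : k < n + 1 then ∑ c, Complex.normSq (w (⟨k, h⟩, c)) else 0 with hF
  have hFval : ∀ i : Fin (n + 1), F (i : ℕ) = ∑ c, Complex.normSq (w (i, c)) := by
    intro i
    rw [hF]
    simp only [dif_pos i.isLt, Fin.eta]
  have hF_nonneg : ∀ k, 0 ≤ F k := by
    intro k
    simp only [hF]
    split
    · exact Finset.sum_nonneg fun c _ => Complex.normSq_nonneg _
    · exact le_refl 0
  have hsum1 : nsq w = ∑ k ∈ Finset.range (n + 1), F k := by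
    rw [← Fin.sum_univ_eq_sum_range]
    simp only [hnsq]
    rw [Fintype.sum_prod_type]
    exact Finset.sum_congr rfl fun i _ => (hFval i).symm
  have hsum2 : nsq (Sc *ᵥ w) = ∑ k ∈ Finset.range n, F (k + 1) := by
    have step : ∀ i : Fin (n + 1),
        (∑ c, Complex.normSq ((Sc *ᵥ w) (i, c))) =
          (if (i : ℕ) + 1 < n + 1 then F ((i : ℕ) + 1) else 0) := by
      intro i
      by_cases h : (i : ℕ) + 1 < n + 1
      · rw [if_pos h]
        simp only [hF]
        rw [dif_pos h]
        exact Finset.sum_congr rfl fun c _ => by rw [hSc, shift_apply, dif_pos h]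
      · rw [if_neg h]
        apply Finset.sum_eq_zero
        intro c _
        rw [hSc, shift_apply, dif_neg h, map_zero]
    calc nsq (Sc *ᵥ w) = ∑ i : Fin (n + 1), ∑ c, Complex.normSq ((Sc *ᵥ w) (i, c)) := by
          simp only [hnsq]; exact Fintype.sum_prod_type _
      _ = ∑ i : Fin (n + 1), (if (i : ℕ) + 1 < n + 1 then F ((i : ℕ) + 1) else 0) :=
          Finset.sum_congr rfl fun i _ => step i
      _ = ∑ k ∈ Finset.range (n + 1), (if k + 1 < n + 1 then F (k + 1) else 0) :=
          Fin.sum_univ_eq_sum_range (fun k => if k + 1 < n + 1 then F (k + 1) else 0) (n + 1)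
      _ = ∑ k ∈ Finset.range n, (if k + 1 < n + 1 then F (k + 1) else 0) := by
          rw [Finset.sum_range_succ, if_neg (by omega), add_zero]
      _ = ∑ k ∈ Finset.range n, F (k + 1) :=
          Finset.sum_congr rfl fun k hk => if_pos (by
            have := Finset.mem_range.mp hk; omega)
  have hsum3 : ∑ k ∈ Finset.range (n + 1), F k = ∑ k ∈ Finset.range n, F (k + 1) + F 0 :=
    Finset.sum_range_succ' F n
  have hshift_nsq : nsq (Sc *ᵥ w) = nsq w - F 0 := by
    rw [hsum2, hsum1, hsum3]; ring
  -- smul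
  have hsmul : nsq (lam • w) = Complex.normSq lam * nsq w := by
    simp only [hnsq]
    simp only [Pi.smul_apply, smul_eq_mul, Complex.normSq_mul]
    rw [Finset.mul_sum]
  have h1lam : 1 ≤ Complex.normSq lam := by
    rw [← Complex.sq_norm]; nlinarith
  have e1 : Complex.normSq lam * nsq w
      = nsq (Sc *ᵥ w) - nsq (q *ᵥ (Sc *ᵥ w)) := by
    rw [← hsmul, hw]
    have := pyth (Sc *ᵥ w)
    linarith
  have hqa0 : nsq (q *ᵥ (Sc *ᵥ w)) = 0 := by
    have h1 := hnsq_nonneg w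
    have h2 := hF_nonneg 0
    have h3 := hnsq_nonneg (q *ᵥ (Sc *ᵥ w))
    nlinarith [hshift_nsq, e1]
  have hq0 : q *ᵥ (Sc *ᵥ w) = 0 := hnsq_zero _ hqa0
  have heq : lam • w = Sc *ᵥ w := by rw [hw, hq0, sub_zero]
  -- downward induction
  have main : ∀ (k : ℕ) (i : Fin (n + 1)) (c : Fin m), n + 1 ≤ (i : ℕ) + k + 1 →
      w (i, c) = 0 := by
    intro k
    induction k with
    | zero =>
      intro i c hi
      have h2 := congrFun heq (i, c)
      rw [hSc, shift_apply, dif_neg (by omega : ¬ ((i : ℕ) + 1 < n + 1))] at h2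
      simp only [Pi.smul_apply, smul_eq_mul] at h2
      exact (mul_eq_zero.mp h2).resolve_left hlam0
    | succ k ih =>
      intro i c hi
      by_cases h : (i : ℕ) + 1 < n + 1
      · have h2 := congrFun heq (i, c)
        rw [hSc, shift_apply, dif_pos h] at h2
        have h3 : w (⟨(i : ℕ) + 1, h⟩, c) = 0 :=
          ih ⟨(i : ℕ) + 1, h⟩ c (show n + 1 ≤ (i : ℕ) + 1 + k + 1 by omega)
        simp only [Pi.smul_apply, smul_eq_mul, h3] at h2
        exact (mul_eq_zero.mp h2).resolve_left hlam0
      · have h2 := congrFun heq (i, c)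
        rw [hSc, shift_apply, dif_neg h] at h2
        simp only [Pi.smul_apply, smul_eq_mul] at h2
        exact (mul_eq_zero.mp h2).resolve_left hlam0
  funext p
  obtain ⟨i, c⟩ := p
  exact main (n + 1) i c (by omega)

/-- If `R := S̃ + (e_N ⊗ I_m) M_u` satisfies `R J = J A_z` with `J` of full column rank
and `M_u (I - J G_J) = 0`, then `spec A_z ⊆ spec R`, and `R` has spectral radius `< 1`
iff `A_z` does. -/
theorem R_spectrum_characterization {N m r : ℕ} (hN : 1 ≤ N) (hm : 1 ≤ m)
    (Mu : Matrix (Fin m) (Fin N × Fin m) ℝ)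
    (J : Matrix (Fin N × Fin m) (Fin r) ℝ) (hJ : J.rank = r)
    (Az : Matrix (Fin r) (Fin r) ℝ)
    (hRJ : (blockShift N m + eNkronId N m * Mu) * J = J * Az)
    (GJ : Matrix (Fin r) (Fin N × Fin m) ℝ) (hGJ : IsMoorePenrose J GJ)
    (hMu : Mu * (1 - J * GJ) = 0) :
    spectrum ℂ (Az.map Complex.ofReal) ⊆
      spectrum ℂ (((blockShift N m + eNkronId N m * Mu)).map Complex.ofReal) ∧
    ((∀ z ∈ spectrum ℂ (((blockShift N m + eNkronId N m * Mu)).map Complex.ofReal),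
        ‖z‖ < 1) ↔
      (∀ z ∈ spectrum ℂ (Az.map Complex.ofReal), ‖z‖ < 1)) := by
  classical
  obtain ⟨hmp1, hmp2, hmp3, hmp4⟩ := hGJ
  set Rc : Matrix (Fin N × Fin m) (Fin N × Fin m) ℂ :=
    ((blockShift N m + eNkronId N m * Mu)).map Complex.ofReal with hRc
  set Jc : Matrix (Fin N × Fin m) (Fin r) ℂ := J.map Complex.ofReal with hJc
  set GJc : Matrix (Fin r) (Fin N × Fin m) ℂ := GJ.map Complex.ofReal with hGJc
  set Azc : Matrix (Fin r) (Fin r) ℂ := Az.map Complex.ofReal with hAzc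
  set Muc : Matrix (Fin m) (Fin N × Fin m) ℂ := Mu.map Complex.ofReal with hMuc'
  set Sc : Matrix (Fin N × Fin m) (Fin N × Fin m) ℂ :=
    (blockShift N m).map Complex.ofReal with hScdef
  set Ec : Matrix (Fin N × Fin m) (Fin m) ℂ := (eNkronId N m).map Complex.ofReal with hEc
  have hRcdecomp : Rc = Sc + Ec * Muc := by
    rw [hRc, mapAddAux, mapMulAux]
  have hmp1c : Jc * GJc * Jc = Jc := by
    rw [hJc, hGJc, ← mapMulAux, ← mapMulAux, hmp1]
  have hRJc : Rc * Jc = Jc * Azc := by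
    rw [hRc, hJc, hAzc, ← mapMulAux, ← mapMulAux, hRJ]
  have hMuc : Muc * (1 - Jc * GJc) = 0 := by
    have h0 := congrArg (fun A => A.map Complex.ofReal) hMu
    rw [mapMulAux, mapSubAux, mapOneAux, mapMulAux] at h0
    rw [hMuc', hJc, hGJc]
    rw [h0]
    ext i j
    simp [Matrix.map_apply]
  set Pc : Matrix (Fin N × Fin m) (Fin N × Fin m) ℂ := Jc * GJc with hPc
  have hPcP : Pc * Pc = Pc := by
    nth_rewrite 2 [hPc]
    rw [← Matrix.mul_assoc, hmp1c, ← hPc]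
  have hPcH : Pcᴴ = Pc := by
    have h1 : (J * GJ)ᴴ = (J * GJ)ᵀ := by
      ext i j
      simp [Matrix.conjTranspose_apply, Matrix.transpose_apply]
    have h2 : Pc = ((J * GJ)).map Complex.ofReal := by rw [hPc, mapMulAux, hJc, hGJc]
    rw [h2, ← Matrix.conjTranspose_map Complex.ofReal
        (fun x => (Complex.conj_ofReal x).symm), h1, hmp3]
  have hGJJc : GJc * Jc = 1 := by
    rw [hJc, hGJc, ← mapMulAux, gj_one J hJ GJ hmp1, mapOneAux]
  -- Part 1
  have part1 : spectrum ℂ Azc ⊆ spectrum ℂ Rc := by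
    intro μ hμ
    rw [mem_spec_iff] at hμ ⊢
    obtain ⟨v, hv, hev⟩ := hμ
    refine ⟨Jc *ᵥ v, ?_, ?_⟩
    · intro h0
      apply hv
      have h1 : GJc *ᵥ (Jc *ᵥ v) = v := by
        rw [Matrix.mulVec_mulVec, hGJJc, Matrix.one_mulVec]
      rw [h0, Matrix.mulVec_zero] at h1
      exact h1.symm
    · rw [Matrix.mulVec_mulVec, hRJc, ← Matrix.mulVec_mulVec, hev, Matrix.mulVec_smul]
  refine ⟨part1, ⟨fun hR z hz => hR z (part1 hz), ?_⟩⟩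
  -- Part 2 reverse
  intro hAz z hz
  by_contra hcon
  push_neg at hcon
  rw [mem_spec_iff] at hz
  obtain ⟨x, hx0, hxe⟩ := hz
  -- matrix identity over ℂ
  have h1 : Rc * (1 - Pc) = Sc * (1 - Pc) := by
    rw [hRcdecomp, Matrix.add_mul, Matrix.mul_assoc, hMuc, Matrix.mul_zero, add_zero]
  have h3 : (1 - Pc) * Jc = 0 := by
    rw [Matrix.sub_mul, Matrix.one_mul, hPc, hmp1c, sub_self]
  have h2 : (1 - Pc) * (Rc * Pc) = 0 := by
    have hRP : Rc * Pc = Jc * (Azc * GJc) := by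
      calc Rc * Pc = (Rc * Jc) * GJc := by rw [hPc, Matrix.mul_assoc]
        _ = (Jc * Azc) * GJc := by rw [hRJc]
        _ = Jc * (Azc * GJc) := Matrix.mul_assoc _ _ _
    rw [hRP, ← Matrix.mul_assoc, h3, Matrix.zero_mul]
  have hidc : (1 - Pc) * Rc = (1 - Pc) * (Sc * (1 - Pc)) := by
    have hsum : Pc + (1 - Pc) = 1 := by abel
    calc (1 - Pc) * Rc = (1 - Pc) * (Rc * Pc + Rc * (1 - Pc)) := by
          rw [← Matrix.mul_add, hsum, Matrix.mul_one]
      _ = (1 - Pc) * (Rc * Pc) + (1 - Pc) * (Rc * (1 - Pc)) := Matrix.mul_add _ _ _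
      _ = (1 - Pc) * (Sc * (1 - Pc)) := by
          rw [h2, h1, zero_add]
  set w : Fin N × Fin m → ℂ := (1 - Pc) *ᵥ x with hwdef
  have hw1 : z • w = Sc *ᵥ w - Pc *ᵥ (Sc *ᵥ w) := by
    have e1 : z • w = ((1 - Pc) * Rc) *ᵥ x := by
      rw [← Matrix.mulVec_mulVec, hxe, Matrix.mulVec_smul, ← hwdef]
    rw [hidc] at e1
    rw [e1, ← Matrix.mulVec_mulVec, ← Matrix.mulVec_mulVec, ← hwdef,
        Matrix.sub_mulVec, Matrix.one_mulVec]
  have hw0 : w = 0 := key_nilp hN Pc hPcP hPcH z hcon w (by rw [hw1, hScdef])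
  have hxP : Pc *ᵥ x = x := by
    rw [hwdef, Matrix.sub_mulVec, Matrix.one_mulVec] at hw0
    exact (sub_eq_zero.mp hw0).symm
  set v : Fin r → ℂ := GJc *ᵥ x with hvdef
  have hJv : Jc *ᵥ v = x := by
    rw [hvdef, Matrix.mulVec_mulVec, ← hPc, hxP]
  have hvne : v ≠ 0 := by
    intro h0
    rw [h0, Matrix.mulVec_zero] at hJv
    exact hx0 hJv.symm
  have heigv : Azc *ᵥ v = z • v := by
    have h5 : Jc *ᵥ (Azc *ᵥ v) = Jc *ᵥ (z • v) := by
      calc Jc *ᵥ (Azc *ᵥ v) = (Jc * Azc) *ᵥ v := Matrix.mulVec_mulVec _ _ _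
        _ = (Rc * Jc) *ᵥ v := by rw [hRJc]
        _ = Rc *ᵥ (Jc *ᵥ v) := (Matrix.mulVec_mulVec _ _ _).symm
        _ = Rc *ᵥ x := by rw [hJv]
        _ = z • x := hxe
        _ = z • (Jc *ᵥ v) := by rw [hJv]
        _ = Jc *ᵥ (z • v) := (Matrix.mulVec_smul _ _ _).symm
    calc Azc *ᵥ v = (GJc * Jc) *ᵥ (Azc *ᵥ v) := by rw [hGJJc, Matrix.one_mulVec]
      _ = GJc *ᵥ (Jc *ᵥ (Azc *ᵥ v)) := (Matrix.mulVec_mulVec _ _ _).symm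
      _ = GJc *ᵥ (Jc *ᵥ (z • v)) := by rw [h5]
      _ = (GJc * Jc) *ᵥ (z • v) := Matrix.mulVec_mulVec _ _ _
      _ = z • v := by rw [hGJJc, Matrix.one_mulVec]
  have hzspec : z ∈ spectrum ℂ Azc := (mem_spec_iff _ _).mpr ⟨v, hvne, heigv⟩
  exact absurd (hAz z hzspec) (not_lt.mpr hcon)
end

section
/- Let P ∈ ℝ^{m×(L+1)p} satisfy P · I_L = [I_m, 0], and define Ã := A − B P O_L. Suppose λ ∈ ℂ, ξ ∈ ℂⁿ, μ ∈ ℂ^m with (ξ, μ) ≠ (0,0) satisfy (A − λI) ξ + B μ = 0 and C ξ + D μ = 0 (i.e., λ is an invariant zero with state-input direction (ξ, μ)). Then ξ ≠ 0, μ = −P O_L ξ, and Ã ξ = λ ξ; in particular, every invariant zero of the system is an eigenvalue of Ã. -/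
open Matrix

/-- If `λ` is an invariant zero with state-input direction `(ξ, μ) ≠ (0,0)`, i.e.
`(A - λI) ξ + B μ = 0` and `C ξ + D μ = 0`, and `P I_L = [I_m, 0]`, then `ξ ≠ 0`,
`μ = -P O_L ξ`, and `Ã ξ = λ ξ` for `Ã := A - B P O_L`; so every invariant zero is an
eigenvalue of `Ã`. -/
theorem invariant_zero_is_eigenvalue_of_tildeA {n m p L : ℕ}
    (A : Matrix (Fin n) (Fin n) ℝ) (B : Matrix (Fin n) (Fin m) ℝ)
    (C : Matrix (Fin p) (Fin n) ℝ) (D : Matrix (Fin p) (Fin m) ℝ)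
    (P : Matrix (Fin m) (Fin (L + 1) × Fin p) ℝ)
    (hP : P * invMat A B C D L = idZero m L)
    (lam : ℂ) (ξ : Fin n → ℂ) (μ : Fin m → ℂ)
    (hne : ¬(ξ = 0 ∧ μ = 0))
    (h1 : (A.map Complex.ofReal - lam • 1).mulVec ξ + (B.map Complex.ofReal).mulVec μ = 0)
    (h2 : (C.map Complex.ofReal).mulVec ξ + (D.map Complex.ofReal).mulVec μ = 0) :
    ξ ≠ 0 ∧
    μ = -((P * obsMat A C L).map Complex.ofReal).mulVec ξ ∧
    ((A - B * P * obsMat A C L).map Complex.ofReal).mulVec ξ = lam • ξ := by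
    classical
  -- map of products / abbreviations
  have hmm : ∀ {α β γ : Type} [Fintype β] (M : Matrix α β ℝ) (N : Matrix β γ ℝ),
      (M * N).map Complex.ofReal = M.map Complex.ofReal * N.map Complex.ofReal := by
    intros α β γ _ M N
    exact Matrix.map_mul (f := Complex.ofRealHom)
  have hsum : ∀ {a b : ℕ} (M : Matrix (Fin a) (Fin b) ℂ) (s : Finset ℕ) (f : ℕ → Fin b → ℂ),
      M.mulVec (∑ i ∈ s, f i) = ∑ i ∈ s, M.mulVec (f i) := by
    intros a b M s f
    exact map_sum M.mulVecLin f s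
  -- basic consequences of h1, h2
  have hAB : (A.map Complex.ofReal).mulVec ξ + (B.map Complex.ofReal).mulVec μ = lam • ξ := by
    have h := h1
    rw [Matrix.sub_mulVec, Matrix.smul_mulVec, Matrix.one_mulVec,
      sub_add_eq_add_sub, sub_eq_zero] at h
    exact h
  have hA : (A.map Complex.ofReal).mulVec ξ = lam • ξ - (B.map Complex.ofReal).mulVec μ :=
    eq_sub_of_add_eq hAB
  have hC : (C.map Complex.ofReal).mulVec ξ = -((D.map Complex.ofReal).mulVec μ) :=
    eq_neg_of_add_eq_zero_left h2
  -- state evolution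
  have hx : ∀ k : ℕ, ((A ^ k).map Complex.ofReal).mulVec ξ
      = lam ^ k • ξ
        - ∑ i ∈ Finset.range k, lam ^ i • ((A ^ (k - 1 - i) * B).map Complex.ofReal).mulVec μ := by
    intro k
    induction k with
    | zero =>
      simp [Matrix.map_one _ Complex.ofReal_zero Complex.ofReal_one, Matrix.one_mulVec]
    | succ k ih =>
      rw [pow_succ', hmm, ← Matrix.mulVec_mulVec, ih, Matrix.mulVec_sub, Matrix.mulVec_smul,
        hA, hsum]
      have hterm : ∀ i ∈ Finset.range k,
          (A.map Complex.ofReal).mulVec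
              (lam ^ i • ((A ^ (k - 1 - i) * B).map Complex.ofReal).mulVec μ)
            = lam ^ i • ((A ^ (k + 1 - 1 - i) * B).map Complex.ofReal).mulVec μ := by
        intro i hi
        rw [Finset.mem_range] at hi
        rw [Matrix.mulVec_smul, Matrix.mulVec_mulVec, ← hmm, ← Matrix.mul_assoc, ← pow_succ']
        have he : k - 1 - i + 1 = k + 1 - 1 - i := by omega
        rw [he]
      rw [Finset.sum_congr rfl hterm, Finset.sum_range_succ]
      have h0 : (A ^ (k + 1 - 1 - k) * B) = B := by norm_num
      rw [h0, smul_sub, smul_smul, ← pow_succ]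
      abel
  -- output identity
  have hy : ∀ k : ℕ, ((C * A ^ k).map Complex.ofReal).mulVec ξ
      = -(lam ^ k • (D.map Complex.ofReal).mulVec μ)
        - ∑ i ∈ Finset.range k,
            lam ^ i • ((C * A ^ (k - 1 - i) * B).map Complex.ofReal).mulVec μ := by
    intro k
    rw [hmm, ← Matrix.mulVec_mulVec, hx k, Matrix.mulVec_sub, Matrix.mulVec_smul, hC, hsum]
    congr 1
    · rw [smul_neg]
    · refine Finset.sum_congr rfl fun i hi => ?_
      rw [Matrix.mulVec_smul, Matrix.mulVec_mulVec, ← hmm, ← Matrix.mul_assoc]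
  -- the stacked input vector
  set v : Fin (L + 1) × Fin m → ℂ := fun ic => lam ^ (ic.1 : ℕ) * μ ic.2 with hv
  -- key stacked identity  O_L ξ = - I_L v
  have key : ((obsMat A C L).map Complex.ofReal).mulVec ξ
      = -(((invMat A B C D L).map Complex.ofReal).mulVec v) := by
    funext jr
    obtain ⟨j, r⟩ := jr
    have hL : (((obsMat A C L).map Complex.ofReal).mulVec ξ) (j, r)
        = (((C * A ^ (j : ℕ)).map Complex.ofReal).mulVec ξ) r := rfl
    rw [hL, hy (j : ℕ)]
    have hR : (((invMat A B C D L).map Complex.ofReal).mulVec v) (j, r)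
        = ∑ i : Fin (L + 1), ∑ c : Fin m,
            (Complex.ofReal (invMat A B C D L (j, r) (i, c))) * (lam ^ (i : ℕ) * μ c) := by
      simp [Matrix.mulVec, dotProduct, Fintype.sum_prod_type, hv, Matrix.map_apply]
    rw [Pi.neg_apply, hR]
    -- compute each block-row contribution
    have hblock : ∀ i : Fin (L + 1),
        (∑ c : Fin m, (Complex.ofReal (invMat A B C D L (j, r) (i, c))) * (lam ^ (i : ℕ) * μ c))
          = (if (i : ℕ) = (j : ℕ) then lam ^ (j : ℕ) * ((D.map Complex.ofReal).mulVec μ) r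
             else if (i : ℕ) < (j : ℕ) then
               lam ^ (i : ℕ) *
                 (((C * A ^ ((j : ℕ) - 1 - (i : ℕ)) * B).map Complex.ofReal).mulVec μ) r
             else 0) := by
      intro i
      by_cases hij : (i : ℕ) = (j : ℕ)
      · rw [if_pos hij]
        have hji : ((j : ℕ) = (i : ℕ)) := hij.symm
        simp only [invMat, Matrix.map_apply, if_pos hji, hij, if_true, eq_self_iff_true,
          Matrix.mulVec, dotProduct, Finset.mul_sum]
        exact Finset.sum_congr rfl fun c _ => by ring
      · rw [if_neg hij]
        have hji : ¬ ((j : ℕ) = (i : ℕ)) := fun h => hij h.symm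
        by_cases hlt : (i : ℕ) < (j : ℕ)
        · rw [if_pos hlt]
          have hesub : (j : ℕ) - (i : ℕ) - 1 = (j : ℕ) - 1 - (i : ℕ) := by omega
          simp only [invMat, Matrix.map_apply, if_neg hji, if_pos hlt, hesub, Matrix.mulVec,
            dotProduct, Finset.mul_sum]
          exact Finset.sum_congr rfl fun c _ => by ring
        · rw [if_neg hlt]
          refine Finset.sum_eq_zero fun c _ => ?_
          simp [invMat, hji, hlt]
    rw [Finset.sum_congr rfl fun i _ => hblock i]
    -- turn the Fin sum into a range sum and truncate
    set g : ℕ → ℂ := fun i =>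
      if i = (j : ℕ) then lam ^ (j : ℕ) * ((D.map Complex.ofReal).mulVec μ) r
      else if i < (j : ℕ) then
        lam ^ i * (((C * A ^ ((j : ℕ) - 1 - i) * B).map Complex.ofReal).mulVec μ) r
      else 0 with hg
    have h1' : (∑ i : Fin (L + 1),
        (if (i : ℕ) = (j : ℕ) then lam ^ (j : ℕ) * ((D.map Complex.ofReal).mulVec μ) r
         else if (i : ℕ) < (j : ℕ) then
           lam ^ (i : ℕ) *
             (((C * A ^ ((j : ℕ) - 1 - (i : ℕ)) * B).map Complex.ofReal).mulVec μ) r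
         else 0)) = ∑ i ∈ Finset.range (L + 1), g i := by
      rw [← Fin.sum_univ_eq_sum_range g (L + 1)]
    rw [h1']
    have hsub : ∑ i ∈ Finset.range (L + 1), g i = ∑ i ∈ Finset.range ((j : ℕ) + 1), g i := by
      refine (Finset.sum_subset ?_ ?_).symm
      · exact Finset.range_subset_range.mpr (by omega)
      · intro i _ hi
        rw [Finset.mem_range, not_lt] at hi
        simp only [hg]
        rw [if_neg (by omega), if_neg (by omega)]
    rw [hsub, Finset.sum_range_succ]
    have hgj : g (j : ℕ) = lam ^ (j : ℕ) * ((D.map Complex.ofReal).mulVec μ) r := by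
      simp [hg]
    have hgi : ∀ i ∈ Finset.range (j : ℕ), g i
        = lam ^ i * (((C * A ^ ((j : ℕ) - 1 - i) * B).map Complex.ofReal).mulVec μ) r := by
      intro i hi
      rw [Finset.mem_range] at hi
      simp only [hg]
      rw [if_neg (by omega), if_pos hi]
    rw [Finset.sum_congr rfl hgi, hgj]
    simp [Finset.sum_apply, Pi.smul_apply, smul_eq_mul]
    ring
  -- P O_L ξ = -μ
  have hPO : ((P * obsMat A C L).map Complex.ofReal).mulVec ξ = -μ := by
    rw [hmm, ← Matrix.mulVec_mulVec, key, Matrix.mulVec_neg, Matrix.mulVec_mulVec, ← hmm, hP]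
    have hid : ((idZero m L).map Complex.ofReal).mulVec v = μ := by
      funext r
      have hexp : (((idZero m L).map Complex.ofReal).mulVec v) r
          = ∑ i : Fin (L + 1), ∑ c : Fin m,
              Complex.ofReal (idZero m L r (i, c)) * (lam ^ (i : ℕ) * μ c) := by
        simp [Matrix.mulVec, dotProduct, Fintype.sum_prod_type, hv, Matrix.map_apply]
      rw [hexp, Finset.sum_eq_single (0 : Fin (L + 1))]
      · rw [Finset.sum_eq_single r]
        · simp [idZero]
        · intro c _ hc
          simp [idZero, show r ≠ c from fun h => hc h.symm]
        · intro h
          exact absurd (Finset.mem_univ r) h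
      · intro b _ hb
        refine Finset.sum_eq_zero fun c _ => ?_
        have hb' : ¬((b : ℕ) = 0) := fun h => hb (Fin.ext h)
        simp [idZero, hb']
      · intro h
        exact absurd (Finset.mem_univ _) h
    rw [hid]
  -- conclusions
  have hxne : ξ ≠ 0 := by
    intro hξ
    apply hne
    refine ⟨hξ, ?_⟩
    have := hPO
    rw [hξ, Matrix.mulVec_zero] at this
    simpa using this.symm
  refine ⟨hxne, by rw [hPO, neg_neg], ?_⟩
  have hsplit : (A - B * P * obsMat A C L).map Complex.ofReal
      = A.map Complex.ofReal - (B * P * obsMat A C L).map Complex.ofReal :=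
    Matrix.map_sub Complex.ofRealHom (fun x y => by simp) _ _
  rw [hsplit, Matrix.sub_mulVec, Matrix.mul_assoc, hmm, ← Matrix.mulVec_mulVec, hPO,
    Matrix.mulVec_neg, sub_neg_eq_add, hAB]
end
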